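/- arXiv:1407.2472 — 6 statements merged into one kernel-verified Lean document; each statement's English description precedes it below -/
import Mathlib

section
/- Let (Ω,Σ,μ) be a σ-finite measure space, Σ_a and Σ_b atomic σ-subalgebras of Σ with conditional expectations E_a, E_b, let 2 ≤ p < ∞ and c ≥ 0. If ‖E_aE_bg‖_{L_2(μ)} ≤ c‖g‖_{L_2(μ)} for every g ∈ L_2(μ), then ‖E_aE_bf‖_{L_p(μ)} ≤ c^{2/p}‖f‖_{L_p(μ)} for every f ∈ L_p(μ). -/
open MeasureTheory ENNReal

/-- An atomic σ-subalgebra of the ambient σ-algebra, encoded by the countable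
measurable partition of `Ω` into atoms of positive finite measure generating it. -/
structure AtomicPartition {Ω : Type*} {m : MeasurableSpace Ω} (μ : Measure Ω) where
  ι : Type
  countable : Countable ι
  atom : ι → Set Ω
  measurableSet : ∀ i, MeasurableSet (atom i)
  disjoint : Pairwise (Function.onFun Disjoint atom)
  cover : ⋃ i, atom i = Set.univ
  pos : ∀ i, 0 < μ (atom i)
  lt_top : ∀ i, μ (atom i) < ∞

namespace AtomicPartition

variable {Ω : Type*} {m : MeasurableSpace Ω} {μ : Measure Ω}

/-- The σ-algebra generated by the atoms. -/
def sigma (P : AtomicPartition μ) : MeasurableSpace Ω :=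
  MeasurableSpace.generateFrom (Set.range P.atom)

/-- The conditional expectation onto the atomic σ-algebra:
`E f = ∑_A (μ(A)⁻¹ ∫_A f dμ) · 1_A`. -/
noncomputable def condExp (P : AtomicPartition μ) {E : Type*} [NormedAddCommGroup E]
    [NormedSpace ℝ E] (f : Ω → E) : Ω → E := fun x =>
  ∑' i, Set.indicator (P.atom i)
    (fun _ => (μ (P.atom i)).toReal⁻¹ • ∫ y in P.atom i, f y ∂μ) x

end AtomicPartition

/-- `|R_B|`: the number (in `ℝ≥0∞`) of atoms of `Pa` meeting the atom `Pb.atom j`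
in positive measure. -/
noncomputable def rCard {Ω : Type*} {m : MeasurableSpace Ω} (μ : Measure Ω)
    (Pa Pb : AtomicPartition μ) (j : Pb.ι) : ℝ≥0∞ :=
  ∑' _i : {i : Pa.ι // 0 < μ (Pa.atom i ∩ Pb.atom j)}, 1

/-- `∑_{B ∈ R_A} |R_B| · μ(A∩B)² / (μ(A)μ(B))` for the atom `A = Pa.atom i`
(terms with `μ(A∩B) = 0` vanish, so we may sum over all atoms of `Pb`). -/
noncomputable def atomSum {Ω : Type*} {m : MeasurableSpace Ω} (μ : Measure Ω)
    (Pa Pb : AtomicPartition μ) (i : Pa.ι) : ℝ≥0∞ :=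
  ∑' j : Pb.ι, rCard μ Pa Pb j * μ (Pa.atom i ∩ Pb.atom j) ^ 2 /
    (μ (Pa.atom i) * μ (Pb.atom j))

/-- `Σ_a ∩ Σ_b = {Ω, ∅}` modulo `μ`-null sets. -/
def TrivialIntersection {Ω : Type*} {m : MeasurableSpace Ω} (μ : Measure Ω)
    (ma mb : MeasurableSpace Ω) : Prop :=
  ∀ S T : Set Ω, MeasurableSet[ma] S → MeasurableSet[mb] T →
    μ (symmDiff S T) = 0 → μ S = 0 ∨ μ Sᶜ = 0

/-- `(Σ_a, Σ_b)` is an admissible covering of `(Ω, Σ, μ)` with distinguished atoms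
`A0, B0` (which are actual atoms when `μ` is finite, and `∅`, i.e. `none`, when
`μ(Ω) = ∞`). -/
structure IsAdmissibleCovering {Ω : Type*} {m : MeasurableSpace Ω} (μ : Measure Ω)
    (Pa Pb : AtomicPartition μ) (A0 : Option Pa.ι) (B0 : Option Pb.ι) : Prop where
  trivial_inter : TrivialIntersection μ Pa.sigma Pb.sigma
  infinite_case : μ Set.univ = ∞ → A0 = none ∧ B0 = none
  finite_case : μ Set.univ < ∞ → A0.isSome ∧ B0.isSome
  small : min (⨆ i ∈ {i : Pa.ι | some i ≠ A0}, atomSum μ Pa Pb i)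
      (⨆ j ∈ {j : Pb.ι | some j ≠ B0}, atomSum μ Pb Pa j) < 1

section Aux

open Filter

variable {Ω : Type*} {m : MeasurableSpace Ω} {μ : Measure Ω}

namespace AtomicPartition

lemma exists_mem (P : AtomicPartition μ) (x : Ω) : ∃ i, x ∈ P.atom i := by
  have hx : x ∈ ⋃ i, P.atom i := by rw [P.cover]; trivial
  simpa using hx

lemma condExp_apply (P : AtomicPartition μ) {E : Type*} [NormedAddCommGroup E]
    [NormedSpace ℝ E] (f : Ω → E) {i : P.ι} {x : Ω} (hx : x ∈ P.atom i) :
    P.condExp f x = (μ (P.atom i)).toReal⁻¹ • ∫ y in P.atom i, f y ∂μ := by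
  have h : ∀ j, j ≠ i → Set.indicator (P.atom j)
      (fun _ => (μ (P.atom j)).toReal⁻¹ • ∫ y in P.atom j, f y ∂μ) x = 0 := by
    intro j hj
    exact Set.indicator_of_notMem
      (fun hxj => Set.disjoint_left.mp (P.disjoint hj) hxj hx) _
  rw [AtomicPartition.condExp, tsum_eq_single i h, Set.indicator_of_mem hx]

lemma measurable_condExp (P : AtomicPartition μ) (f : Ω → ℂ) :
    Measurable (P.condExp f) := by
  haveI := P.countable
  classical
  set F : P.ι → Ω → ℂ := fun i => (P.atom i).indicator
    (fun _ => (μ (P.atom i)).toReal⁻¹ • ∫ y in P.atom i, f y ∂μ) with hF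
  apply measurable_of_tendsto_metrizable' (atTop : Filter (Finset P.ι))
    (f := fun s x => ∑ i ∈ s, F i x)
  · exact fun s => Finset.measurable_sum _
      fun i _ => measurable_const.indicator (P.measurableSet i)
  · rw [tendsto_pi_nhds]
    intro x
    obtain ⟨i₀, hi₀⟩ := P.exists_mem x
    have h0 : ∀ j, j ≠ i₀ → F j x = 0 := fun j hj =>
      Set.indicator_of_notMem
        (fun hxj => Set.disjoint_left.mp (P.disjoint hj) hxj hi₀) _
    have hs : HasSum (fun i => F i x) (F i₀ x) := hasSum_single i₀ h0
    have hval : P.condExp f x = F i₀ x := by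
      rw [P.condExp_apply f hi₀, hF]
      exact (Set.indicator_of_mem hi₀ fun _ =>
        (μ (P.atom i₀)).toReal⁻¹ • ∫ y in P.atom i₀, f y ∂μ).symm
    rw [hval]
    exact hs

lemma enorm_condExp_le (P : AtomicPartition μ) (f : Ω → ℂ) {i : P.ι} {x : Ω}
    (hx : x ∈ P.atom i) :
    (‖P.condExp f x‖₊ : ℝ≥0∞) ≤
      (μ (P.atom i))⁻¹ * ∫⁻ y in P.atom i, (‖f y‖₊ : ℝ≥0∞) ∂μ := by
  set A := P.atom i with hA
  have hA0 : μ A ≠ 0 := (P.pos i).ne'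
  have hAt : μ A ≠ ∞ := (P.lt_top i).ne
  set L : ℝ≥0∞ := ∫⁻ y in A, (‖f y‖₊ : ℝ≥0∞) ∂μ with hL
  by_cases hLtop : L = ∞
  · rw [hLtop, ENNReal.mul_top (ENNReal.inv_ne_zero.mpr hAt)]
    exact le_top
  have hnorm : ‖∫ y in A, f y ∂μ‖ ≤ L.toReal := by
    refine le_trans (norm_integral_le_lintegral_norm _) ?_
    simp only [hL, ofReal_norm, enorm_eq_nnnorm, le_refl]
  have htR : (0:ℝ) < (μ A).toReal := ENNReal.toReal_pos hA0 hAt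
  calc (‖P.condExp f x‖₊ : ℝ≥0∞)
      = ENNReal.ofReal ((μ A).toReal⁻¹ * ‖∫ y in A, f y ∂μ‖) := by
        rw [P.condExp_apply f hx, ← enorm_eq_nnnorm, ← ofReal_norm, norm_smul,
          Real.norm_eq_abs, abs_of_nonneg (by positivity)]
    _ ≤ ENNReal.ofReal ((μ A).toReal⁻¹ * L.toReal) := by
        exact ENNReal.ofReal_le_ofReal
          (mul_le_mul_of_nonneg_left hnorm (by positivity))
    _ = (μ A)⁻¹ * L := by
        rw [ENNReal.ofReal_mul (by positivity), ENNReal.ofReal_inv_of_pos htR,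
          ENNReal.ofReal_toReal hAt, ENNReal.ofReal_toReal hLtop]

lemma enorm_condExp_ofReal (P : AtomicPartition μ) {F : Ω → ℝ} (hF : ∀ y, 0 ≤ F y)
    {i : P.ι} {x : Ω} (hx : x ∈ P.atom i)
    (hint : IntegrableOn F (P.atom i) μ) :
    (‖P.condExp (fun y => (F y : ℂ)) x‖₊ : ℝ≥0∞) =
      (μ (P.atom i))⁻¹ * ∫⁻ y in P.atom i, (‖F y‖₊ : ℝ≥0∞) ∂μ := by
  set A := P.atom i with hA
  have hA0 : μ A ≠ 0 := (P.pos i).ne'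
  have hAt : μ A ≠ ∞ := (P.lt_top i).ne
  have htR : (0:ℝ) < (μ A).toReal := ENNReal.toReal_pos hA0 hAt
  have hIc : ∫ y in A, ((F y : ℂ)) ∂μ = ((∫ y in A, F y ∂μ : ℝ) : ℂ) :=
    integral_ofReal
  have hInn : (0:ℝ) ≤ ∫ y in A, F y ∂μ := integral_nonneg (fun y => hF y)
  have hlin : ENNReal.ofReal (∫ y in A, F y ∂μ) =
      ∫⁻ y in A, ENNReal.ofReal (F y) ∂μ :=
    ofReal_integral_eq_lintegral_ofReal hint (Filter.Eventually.of_forall fun y => hF y)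
  have hFe : ∀ y, ENNReal.ofReal (F y) = (‖F y‖₊ : ℝ≥0∞) := fun y =>
    ((Real.enorm_eq_ofReal (hF y)).symm.trans (enorm_eq_nnnorm _))
  calc (‖P.condExp (fun y => (F y : ℂ)) x‖₊ : ℝ≥0∞)
      = ENNReal.ofReal ((μ A).toReal⁻¹ * ∫ y in A, F y ∂μ) := by
        rw [P.condExp_apply _ hx, hIc, ← enorm_eq_nnnorm, ← ofReal_norm, norm_smul,
          Real.norm_eq_abs, abs_of_nonneg (by positivity),
          Complex.norm_real, Real.norm_eq_abs, abs_of_nonneg hInn]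
    _ = (μ A)⁻¹ * ∫⁻ y in A, (‖F y‖₊ : ℝ≥0∞) ∂μ := by
        rw [ENNReal.ofReal_mul (by positivity), ENNReal.ofReal_inv_of_pos htR,
          ENNReal.ofReal_toReal hAt, hlin]
        congr 1
        exact lintegral_congr fun y => hFe y

end AtomicPartition

lemma conj_rpow_aux {a : ℝ≥0∞} (h0 : a ≠ 0) (ht : a ≠ ∞) {r q : ℝ}
    (hsum : r⁻¹ + q⁻¹ = 1) : a⁻¹ * a ^ (1/q) = (a⁻¹) ^ (1/r) := by
  rw [← ENNReal.rpow_neg_one a, ← ENNReal.rpow_add _ _ h0 ht, ← ENNReal.rpow_mul]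
  congr 1
  simp only [one_div]
  linarith

/-- Jensen/Hölder: the `r`-th power of an average is at most the average of the
`r`-th powers, for `r ≥ 1`, in `ℝ≥0∞`. -/
lemma avg_rpow_le {A : Set Ω} (h0 : μ A ≠ 0) (ht : μ A ≠ ∞)
    {G : Ω → ℝ≥0∞} (hG : AEMeasurable G (μ.restrict A)) {r : ℝ} (hr : 1 ≤ r) :
    ((μ A)⁻¹ * ∫⁻ y in A, G y ∂μ) ^ r ≤ (μ A)⁻¹ * ∫⁻ y in A, G y ^ r ∂μ := by
  rcases eq_or_lt_of_le hr with hr1 | hr1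
  · simp [← hr1]
  have hr0 : 0 < r := lt_trans one_pos hr1
  set q : ℝ := Real.conjExponent r with hq
  have hpq : r.HolderConjugate q := Real.HolderConjugate.conjExponent hr1
  set X : ℝ≥0∞ := ∫⁻ y in A, G y ^ r ∂μ with hX
  by_cases hXtop : X = ∞
  · rw [hXtop, ENNReal.mul_top (ENNReal.inv_ne_zero.mpr ht)]
    exact le_top
  have hHolder : ∫⁻ y in A, G y ∂μ ≤ X ^ (1/r) * (μ A) ^ (1/q) := by
    have := ENNReal.lintegral_mul_le_Lp_mul_Lq (μ.restrict A) hpq hG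
      (aemeasurable_const (b := (1:ℝ≥0∞)))
    simpa [Measure.restrict_apply_univ] using this
  have key : (μ A)⁻¹ * ∫⁻ y in A, G y ∂μ ≤ ((μ A)⁻¹ * X) ^ (1/r) := by
    calc (μ A)⁻¹ * ∫⁻ y in A, G y ∂μ
        ≤ (μ A)⁻¹ * (X ^ (1/r) * (μ A) ^ (1/q)) := by
          exact mul_le_mul_right hHolder _
      _ = ((μ A)⁻¹) ^ (1/r) * X ^ (1/r) := by
          have h1 : (μ A)⁻¹ * (μ A) ^ (1/q) = ((μ A)⁻¹) ^ (1/r) := by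
            rw [conj_rpow_aux h0 ht hpq.inv_add_inv_eq_one]
          rw [mul_comm (X ^ (1/r)) ((μ A) ^ (1/q)), ← mul_assoc, h1]
      _ = ((μ A)⁻¹ * X) ^ (1/r) := by
          rw [ENNReal.mul_rpow_of_nonneg _ _ (by positivity)]
  calc ((μ A)⁻¹ * ∫⁻ y in A, G y ∂μ) ^ r
      ≤ (((μ A)⁻¹ * X) ^ (1/r)) ^ r := ENNReal.rpow_le_rpow key hr0.le
    _ = (μ A)⁻¹ * X := by
        rw [← ENNReal.rpow_mul, one_div, inv_mul_cancel₀ hr0.ne', ENNReal.rpow_one]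

/-- `Memℒp ⇒ IntegrableOn` over finite-measure sets, exponent 2. -/
lemma memL2_integrableOn {E : Type*} [NormedAddCommGroup E] {F : Ω → E}
    (hF : MemLp F 2 μ) {S : Set Ω} (hfin : μ S ≠ ∞) :
    IntegrableOn F S μ := by
  haveI : IsFiniteMeasure (μ.restrict S) := by
    constructor
    rw [Measure.restrict_apply_univ]
    exact lt_top_iff_ne_top.mpr hfin
  exact (hF.restrict S).integrable (by norm_num)

/-- The conditional expectation is an `L²` contraction (lintegral form). -/
lemma lintegral_sq_condExp_le (P : AtomicPartition μ) {F : Ω → ℂ}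
    (hF : AEStronglyMeasurable F μ) :
    ∫⁻ x, (‖P.condExp F x‖₊ : ℝ≥0∞) ^ (2:ℝ) ∂μ ≤
      ∫⁻ x, (‖F x‖₊ : ℝ≥0∞) ^ (2:ℝ) ∂μ := by
  haveI := P.countable
  have hptwise : ∀ i, ∀ x ∈ P.atom i, (‖P.condExp F x‖₊ : ℝ≥0∞) ^ (2:ℝ) ≤
      (μ (P.atom i))⁻¹ * ∫⁻ y in P.atom i, (‖F y‖₊ : ℝ≥0∞) ^ (2:ℝ) ∂μ := by
    intro i x hx
    refine le_trans (ENNReal.rpow_le_rpow (P.enorm_condExp_le F hx) (by norm_num)) ?_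
    exact avg_rpow_le (P.pos i).ne' (P.lt_top i).ne
      (hF.enorm.restrict) (by norm_num)
  have hcover : ∫⁻ x, (‖P.condExp F x‖₊ : ℝ≥0∞) ^ (2:ℝ) ∂μ =
      ∑' i, ∫⁻ x in P.atom i, (‖P.condExp F x‖₊ : ℝ≥0∞) ^ (2:ℝ) ∂μ := by
    rw [← lintegral_iUnion P.measurableSet P.disjoint, P.cover,
      Measure.restrict_univ]
  have hcover2 : ∫⁻ x, (‖F x‖₊ : ℝ≥0∞) ^ (2:ℝ) ∂μ =
      ∑' i, ∫⁻ x in P.atom i, (‖F x‖₊ : ℝ≥0∞) ^ (2:ℝ) ∂μ := by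
    rw [← lintegral_iUnion P.measurableSet P.disjoint, P.cover,
      Measure.restrict_univ]
  rw [hcover, hcover2]
  refine ENNReal.tsum_le_tsum fun i => ?_
  calc ∫⁻ x in P.atom i, (‖P.condExp F x‖₊ : ℝ≥0∞) ^ (2:ℝ) ∂μ
      ≤ ∫⁻ _x in P.atom i,
          ((μ (P.atom i))⁻¹ * ∫⁻ y in P.atom i, (‖F y‖₊ : ℝ≥0∞) ^ (2:ℝ) ∂μ) ∂μ := by
        refine setLIntegral_mono' (P.measurableSet i) fun x hx => hptwise i x hx
    _ = ∫⁻ y in P.atom i, (‖F y‖₊ : ℝ≥0∞) ^ (2:ℝ) ∂μ := by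
        rw [setLIntegral_const, mul_comm, ← mul_assoc,
          ENNReal.mul_inv_cancel (P.pos i).ne' (P.lt_top i).ne, one_mul]

end Aux

/-- the `p ≥ 2` contraction estimate in the nonfinite case.  If
`‖E_a E_b g‖₂ ≤ c ‖g‖₂` for every `g ∈ L₂(μ)`, then
`‖E_a E_b f‖_p ≤ c^{2/p} ‖f‖_p` for every `f ∈ L_p(μ)`, `2 ≤ p < ∞`. -/

theorem statement8 {Ω : Type*} [MeasurableSpace Ω] (μ : Measure Ω) [SigmaFinite μ]
    (Pa Pb : AtomicPartition μ) (p c : ℝ) (hp : 2 ≤ p) (hc : 0 ≤ c)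
    (H2 : ∀ g : Ω → ℂ, MemLp g 2 μ →
      eLpNorm (Pa.condExp (Pb.condExp g)) 2 μ ≤ ENNReal.ofReal c * eLpNorm g 2 μ) :
    ∀ f : Ω → ℂ, MemLp f (ENNReal.ofReal p) μ →
      eLpNorm (Pa.condExp (Pb.condExp f)) (ENNReal.ofReal p) μ
        ≤ ENNReal.ofReal (c ^ (2 / p)) * eLpNorm f (ENNReal.ofReal p) μ := by
  intro f hf
  have hp0 : (0:ℝ) < p := lt_of_lt_of_le two_pos hp
  set r : ℝ := p / 2 with hrdef
  have hr1 : 1 ≤ r := by rw [hrdef]; linarith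
  have hr0 : 0 < r := lt_of_lt_of_le one_pos hr1
  have hrp : r * 2 = p := by rw [hrdef]; ring
  have hpne0 : ENNReal.ofReal p ≠ 0 := by
    simpa [ENNReal.ofReal_eq_zero] using hp0.not_ge
  have hpnet : ENNReal.ofReal p ≠ ∞ := ENNReal.ofReal_ne_top
  -- the auxiliary nonnegative function h = ‖f‖ ^ r
  set F₁ : Ω → ℝ := fun y => ‖f y‖ ^ r with hF₁
  have hF₁nonneg : ∀ y, 0 ≤ F₁ y := fun y => Real.rpow_nonneg (norm_nonneg _) r
  set h : Ω → ℂ := fun y => ((F₁ y : ℝ) : ℂ) with hdefh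
  have hF₁sm : AEStronglyMeasurable F₁ μ :=
    (Real.continuous_rpow_const hr0.le).comp_aestronglyMeasurable hf.1.norm
  have hhsm : AEStronglyMeasurable h μ :=
    Complex.continuous_ofReal.comp_aestronglyMeasurable hF₁sm
  -- pointwise enorm identity for h
  have hFe : ∀ y, (‖h y‖₊ : ℝ≥0∞) = (‖f y‖₊ : ℝ≥0∞) ^ r := by
    intro y
    have hnh : ‖h y‖ = F₁ y := by
      simp only [hdefh, Complex.norm_real, Real.norm_eq_abs]
      exact abs_of_nonneg (hF₁nonneg y)
    rw [← enorm_eq_nnnorm, ← ofReal_norm, ← enorm_eq_nnnorm, ← ofReal_norm,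
      ENNReal.ofReal_rpow_of_nonneg (norm_nonneg _) hr0.le, hnh]
  have hF₁e : ∀ y, (‖F₁ y‖₊ : ℝ≥0∞) = (‖f y‖₊ : ℝ≥0∞) ^ r := by
    intro y
    have hnh : ‖F₁ y‖ = F₁ y := by
      rw [Real.norm_eq_abs]; exact abs_of_nonneg (hF₁nonneg y)
    rw [← enorm_eq_nnnorm, ← ofReal_norm, ← enorm_eq_nnnorm, ← ofReal_norm,
      ENNReal.ofReal_rpow_of_nonneg (norm_nonneg _) hr0.le, hnh]
  -- the L^p integral of f is finite
  set If : ℝ≥0∞ := ∫⁻ y, (‖f y‖₊ : ℝ≥0∞) ^ p ∂μ with hIf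
  have hfnorm : eLpNorm f (ENNReal.ofReal p) μ = If ^ (1/p) := by
    rw [eLpNorm_eq_lintegral_rpow_enorm_toReal hpne0 hpnet]
    simp only [enorm_eq_nnnorm]
    rw [ENNReal.toReal_ofReal hp0.le]
  have hIf_lt : If < ∞ := by
    by_contra hcon
    push_neg at hcon
    have : eLpNorm f (ENNReal.ofReal p) μ = ∞ := by
      rw [hfnorm, top_le_iff.mp hcon, ENNReal.top_rpow_of_pos (by positivity)]
    exact absurd this hf.2.ne
  -- h is in L²
  have heLph : eLpNorm h 2 μ = If ^ (1/2 : ℝ) := by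
    rw [eLpNorm_eq_lintegral_rpow_enorm_toReal (by norm_num) (by norm_num)]
    simp only [enorm_eq_nnnorm]
    norm_num
    congr 1
    refine lintegral_congr fun y => ?_
    rw [hFe y, ← ENNReal.rpow_natCast ((‖f y‖₊ : ℝ≥0∞) ^ r) 2, ← ENNReal.rpow_mul]
    congr 1
  have hh2 : MemLp h 2 μ := by
    refine ⟨hhsm, ?_⟩
    rw [heLph]
    exact ENNReal.rpow_lt_top_of_nonneg (by norm_num) hIf_lt.ne
  have hF₁2 : MemLp F₁ 2 μ := by
    refine ⟨hF₁sm, ?_⟩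
    have : eLpNorm F₁ 2 μ = eLpNorm h 2 μ := by
      apply eLpNorm_congr_norm_ae
      refine Filter.Eventually.of_forall fun y => ?_
      simp [hdefh, Complex.norm_real]
    rw [this, heLph]
    exact ENNReal.rpow_lt_top_of_nonneg (by norm_num) hIf_lt.ne
  -- g' = E_b h and its properties
  set g' : Ω → ℂ := Pb.condExp h with hg'def
  have hg'sm : AEStronglyMeasurable g' μ := (Pb.measurable_condExp h).aestronglyMeasurable
  have hg'2 : MemLp g' 2 μ := by
    refine ⟨hg'sm, ?_⟩
    have hbound := lintegral_sq_condExp_le Pb hhsm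
    have h2 : eLpNorm g' 2 μ = (∫⁻ x, (‖g' x‖₊ : ℝ≥0∞) ^ (2:ℝ) ∂μ) ^ (1/2 : ℝ) := by
      rw [eLpNorm_eq_lintegral_rpow_enorm_toReal (by norm_num) (by norm_num)]
      simp only [enorm_eq_nnnorm]
      norm_num
    have h3 : eLpNorm h 2 μ = (∫⁻ x, (‖h x‖₊ : ℝ≥0∞) ^ (2:ℝ) ∂μ) ^ (1/2 : ℝ) := by
      rw [eLpNorm_eq_lintegral_rpow_enorm_toReal (by norm_num) (by norm_num)]
      simp only [enorm_eq_nnnorm]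
      norm_num
    calc eLpNorm g' 2 μ
        = (∫⁻ x, (‖g' x‖₊ : ℝ≥0∞) ^ (2:ℝ) ∂μ) ^ (1/2 : ℝ) := h2
      _ ≤ (∫⁻ x, (‖h x‖₊ : ℝ≥0∞) ^ (2:ℝ) ∂μ) ^ (1/2 : ℝ) :=
          ENNReal.rpow_le_rpow hbound (by norm_num)
      _ = eLpNorm h 2 μ := h3.symm
      _ < ∞ := hh2.2
  -- g' is (pointwise) a nonnegative real
  have hg'real : ∀ y, g' y = ((‖g' y‖ : ℝ) : ℂ) := by
    intro y
    obtain ⟨j, hj⟩ := Pb.exists_mem y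
    have hval : g' y = (((μ (Pb.atom j)).toReal⁻¹ * ∫ z in Pb.atom j, F₁ z ∂μ : ℝ) : ℂ) := by
      rw [hg'def, Pb.condExp_apply h hj]
      rw [show (∫ z in Pb.atom j, h z ∂μ) = ((∫ z in Pb.atom j, F₁ z ∂μ : ℝ) : ℂ) from
        integral_ofReal]
      rw [Complex.real_smul, ← Complex.ofReal_mul]
    have hnn : (0:ℝ) ≤ (μ (Pb.atom j)).toReal⁻¹ * ∫ z in Pb.atom j, F₁ z ∂μ := by
      have := integral_nonneg (f := F₁) (fun z => hF₁nonneg z) (μ := μ.restrict (Pb.atom j))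
      positivity
    rw [hval, Complex.norm_real, Real.norm_eq_abs, abs_of_nonneg hnn]
  -- key pointwise inequality
  have key : ∀ x, (‖Pa.condExp (Pb.condExp f) x‖₊ : ℝ≥0∞) ^ r ≤
      (‖Pa.condExp g' x‖₊ : ℝ≥0∞) := by
    intro x
    obtain ⟨i, hi⟩ := Pa.exists_mem x
    -- inner (Pb-level) pointwise bound
    have hb : ∀ y, (‖Pb.condExp f y‖₊ : ℝ≥0∞) ^ r ≤ (‖g' y‖₊ : ℝ≥0∞) := by
      intro y
      obtain ⟨j, hj⟩ := Pb.exists_mem y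
      have h1 := Pb.enorm_condExp_le f hj
      have h2 := avg_rpow_le (μ := μ) (A := Pb.atom j) (Pb.pos j).ne' (Pb.lt_top j).ne
        hf.1.enorm.restrict hr1
      have hintF₁ : IntegrableOn F₁ (Pb.atom j) μ :=
        memL2_integrableOn hF₁2 (Pb.lt_top j).ne
      have h3 : (‖g' y‖₊ : ℝ≥0∞) =
          (μ (Pb.atom j))⁻¹ * ∫⁻ z in Pb.atom j, (‖F₁ z‖₊ : ℝ≥0∞) ∂μ := by
        rw [hg'def]
        exact Pb.enorm_condExp_ofReal hF₁nonneg hj hintF₁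
      calc (‖Pb.condExp f y‖₊ : ℝ≥0∞) ^ r
          ≤ ((μ (Pb.atom j))⁻¹ * ∫⁻ z in Pb.atom j, (‖f z‖₊ : ℝ≥0∞) ∂μ) ^ r :=
            ENNReal.rpow_le_rpow h1 hr0.le
        _ ≤ (μ (Pb.atom j))⁻¹ * ∫⁻ z in Pb.atom j, (‖f z‖₊ : ℝ≥0∞) ^ r ∂μ := h2
        _ = (‖g' y‖₊ : ℝ≥0∞) := by
            rw [h3]
            congr 1
            exact lintegral_congr fun z => (hF₁e z).symm
    -- outer (Pa-level) bound
    have h1 := Pa.enorm_condExp_le (Pb.condExp f) hi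
    have h2 := avg_rpow_le (μ := μ) (A := Pa.atom i) (Pa.pos i).ne' (Pa.lt_top i).ne
      ((Pb.measurable_condExp f).enorm.aemeasurable.restrict) hr1
    have hintg' : IntegrableOn (fun y => ‖g' y‖) (Pa.atom i) μ :=
      memL2_integrableOn hg'2.norm (Pa.lt_top i).ne
    have h3 : (‖Pa.condExp g' x‖₊ : ℝ≥0∞) =
        (μ (Pa.atom i))⁻¹ * ∫⁻ y in Pa.atom i, (‖(‖g' y‖)‖₊ : ℝ≥0∞) ∂μ := by
      have hrw : Pa.condExp g' = Pa.condExp (fun y => ((‖g' y‖ : ℝ) : ℂ)) := by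
        have hgg : g' = fun y => ((‖g' y‖ : ℝ) : ℂ) := funext hg'real
        exact congrArg Pa.condExp hgg
      rw [hrw]
      exact Pa.enorm_condExp_ofReal (fun y => norm_nonneg _) hi hintg'
    calc (‖Pa.condExp (Pb.condExp f) x‖₊ : ℝ≥0∞) ^ r
        ≤ ((μ (Pa.atom i))⁻¹ * ∫⁻ y in Pa.atom i, (‖Pb.condExp f y‖₊ : ℝ≥0∞) ∂μ) ^ r :=
          ENNReal.rpow_le_rpow h1 hr0.le
      _ ≤ (μ (Pa.atom i))⁻¹ * ∫⁻ y in Pa.atom i, (‖Pb.condExp f y‖₊ : ℝ≥0∞) ^ r ∂μ := h2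
      _ ≤ (μ (Pa.atom i))⁻¹ * ∫⁻ y in Pa.atom i, (‖g' y‖₊ : ℝ≥0∞) ∂μ :=
          mul_le_mul_right (lintegral_mono fun y => hb y) _
      _ = (‖Pa.condExp g' x‖₊ : ℝ≥0∞) := by
          rw [h3]
          congr 1
          exact lintegral_congr fun y => by rw [nnnorm_norm]
  -- assemble everything
  have hH2 := H2 h hh2
  set J : ℝ≥0∞ := ∫⁻ x, (‖Pa.condExp g' x‖₊ : ℝ≥0∞) ^ (2:ℝ) ∂μ with hJ
  have hTh : eLpNorm (Pa.condExp (Pb.condExp h)) 2 μ = J ^ (1/2 : ℝ) := by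
    rw [eLpNorm_eq_lintegral_rpow_enorm_toReal (by norm_num) (by norm_num)]
    simp only [enorm_eq_nnnorm]
    norm_num [hJ, hg'def]
  have hIT : ∫⁻ x, (‖Pa.condExp (Pb.condExp f) x‖₊ : ℝ≥0∞) ^ p ∂μ ≤ J := by
    refine lintegral_mono fun x => ?_
    calc (‖Pa.condExp (Pb.condExp f) x‖₊ : ℝ≥0∞) ^ p
        = ((‖Pa.condExp (Pb.condExp f) x‖₊ : ℝ≥0∞) ^ r) ^ (2:ℝ) := by
          rw [← ENNReal.rpow_mul, hrp]
      _ ≤ (‖Pa.condExp g' x‖₊ : ℝ≥0∞) ^ (2:ℝ) :=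
          ENNReal.rpow_le_rpow (key x) (by norm_num)
  have hTfnorm : eLpNorm (Pa.condExp (Pb.condExp f)) (ENNReal.ofReal p) μ =
      (∫⁻ x, (‖Pa.condExp (Pb.condExp f) x‖₊ : ℝ≥0∞) ^ p ∂μ) ^ (1/p) := by
    rw [eLpNorm_eq_lintegral_rpow_enorm_toReal hpne0 hpnet]
    simp only [enorm_eq_nnnorm]
    rw [ENNReal.toReal_ofReal hp0.le]
  have hJle : J ^ (1/2 : ℝ) ≤ ENNReal.ofReal c * If ^ (1/2 : ℝ) := by
    rw [← hTh, ← heLph]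
    exact hH2
  calc eLpNorm (Pa.condExp (Pb.condExp f)) (ENNReal.ofReal p) μ
      = (∫⁻ x, (‖Pa.condExp (Pb.condExp f) x‖₊ : ℝ≥0∞) ^ p ∂μ) ^ (1/p) := hTfnorm
    _ ≤ J ^ (1/p) := ENNReal.rpow_le_rpow hIT (by positivity)
    _ = (J ^ (1/2 : ℝ)) ^ (2/p) := by
        rw [← ENNReal.rpow_mul]
        congr 1
        field_simp
    _ ≤ (ENNReal.ofReal c * If ^ (1/2 : ℝ)) ^ (2/p) :=
        ENNReal.rpow_le_rpow hJle (by positivity)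
    _ = ENNReal.ofReal (c ^ (2/p)) * eLpNorm f (ENNReal.ofReal p) μ := by
        rw [ENNReal.mul_rpow_of_nonneg _ _ (by positivity),
          ENNReal.ofReal_rpow_of_nonneg hc (by positivity), ← ENNReal.rpow_mul,
          hfnorm]
        congr 1
        field_simp
end

section
/- Let (Ω,Σ,μ) be a measure space, 1 < p < ∞, and let A_1, A_2, B be measurable sets with A_1 ∩ A_2 = ∅, 0 < μ(A_1) < ∞, 0 < μ(A_2) < ∞, 0 < μ(B) < ∞, μ(A_1∩B) > 0 and μ(A_2∩B) > 0. Then there exists a constant C, depending only on p, μ(A_1)/μ(A_1∩B) and μ(A_2)/μ(A_2∩B), such that for every measurable f : Ω → ℂ with ∫_{A_1∪A_2∪B} |f|^p dμ < ∞: inf_{k∈ℂ} (∫_{A_1∪A_2} |f−k|^p dμ)^{1/p} ≤ C·[ inf_{k∈ℂ}(∫_{A_1}|f−k|^p dμ)^{1/p} + inf_{k∈ℂ}(∫_{A_2}|f−k|^p dμ)^{1/p} + inf_{k∈ℂ}(∫_{B}|f−k|^p dμ)^{1/p} ]. -/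
open MeasureTheory ENNReal

private lemma eLpNorm_add_measure_le' {α F : Type*} [MeasurableSpace α] [NormedAddCommGroup F]
    (f : α → F) (μ ν : Measure α) {q : ℝ≥0∞} (hq : 1 ≤ q) (hq' : q ≠ ∞) :
    eLpNorm f q (μ + ν) ≤ eLpNorm f q μ + eLpNorm f q ν := by
  have hq0 : q ≠ 0 := fun h => by simp [h] at hq
  have hq1 : 1 ≤ q.toReal := by
    simpa using ENNReal.toReal_mono hq' hq
  rw [eLpNorm_eq_lintegral_rpow_enorm_toReal hq0 hq', eLpNorm_eq_lintegral_rpow_enorm_toReal hq0 hq',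
    eLpNorm_eq_lintegral_rpow_enorm_toReal hq0 hq', lintegral_add_measure]
  exact ENNReal.rpow_add_le_add_rpow _ _ (by positivity)
    (by rw [div_le_one (by linarith)]; linarith)

/-- mass absorption principle.  If `A₁, A₂` are disjoint sets of positive
finite measure and `B` is a set of positive finite measure meeting both in positive measure,
then for `1 < p < ∞` the `L_p`-oscillation of `f` over `A₁ ∪ A₂` is controlled by the sum of
the `L_p`-oscillations over `A₁`, `A₂` and `B`, with a constant depending only on `p`,
`μ(A₁)/μ(A₁∩B)` and `μ(A₂)/μ(A₂∩B)`. -/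
theorem statement9 {Ω : Type*} [MeasurableSpace Ω] (μ : Measure Ω) (p : ℝ) (hp : 1 < p)
    (A1 A2 B : Set Ω) (hA1 : MeasurableSet A1) (hA2 : MeasurableSet A2)
    (hB : MeasurableSet B) (hdisj : Disjoint A1 A2)
    (h1 : 0 < μ A1) (h1' : μ A1 < ∞) (h2 : 0 < μ A2) (h2' : μ A2 < ∞)
    (h3 : 0 < μ B) (h3' : μ B < ∞) (h1B : 0 < μ (A1 ∩ B)) (h2B : 0 < μ (A2 ∩ B)) :
    ∃ C : ℝ, 0 < C ∧ ∀ f : Ω → ℂ, Measurable f →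
      eLpNorm f (ENNReal.ofReal p) (μ.restrict (A1 ∪ A2 ∪ B)) < ∞ →
      (⨅ k : ℂ, eLpNorm (fun x => f x - k) (ENNReal.ofReal p) (μ.restrict (A1 ∪ A2)))
        ≤ ENNReal.ofReal C *
          ((⨅ k : ℂ, eLpNorm (fun x => f x - k) (ENNReal.ofReal p) (μ.restrict A1)) +
           (⨅ k : ℂ, eLpNorm (fun x => f x - k) (ENNReal.ofReal p) (μ.restrict A2)) +
           (⨅ k : ℂ, eLpNorm (fun x => f x - k) (ENNReal.ofReal p) (μ.restrict B))) := by
  have hp0 : (0 : ℝ) < p := one_pos.trans hp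
  set q : ℝ≥0∞ := ENNReal.ofReal p with hq_def
  have hq1 : 1 ≤ q := ENNReal.one_le_ofReal.mpr hp.le
  have hq0 : q ≠ 0 := fun h => by simp [h] at hq1
  have hqt : q ≠ ∞ := ENNReal.ofReal_ne_top
  have hqp : q.toReal = p := ENNReal.toReal_ofReal hp0.le
  -- the ratios
  have h1Bt : μ (A1 ∩ B) ≠ ∞ := ((measure_mono Set.inter_subset_left).trans_lt h1').ne
  have h2Bt : μ (A2 ∩ B) ≠ ∞ := ((measure_mono Set.inter_subset_left).trans_lt h2').ne
  set r1 : ℝ≥0∞ := (μ A1 / μ (A1 ∩ B)) ^ (1 / p) with hr1_def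
  set r2 : ℝ≥0∞ := (μ A2 / μ (A2 ∩ B)) ^ (1 / p) with hr2_def
  have hr1t : r1 ≠ ∞ :=
    (ENNReal.rpow_lt_top_of_nonneg (by positivity)
      (ENNReal.div_lt_top h1'.ne h1B.ne').ne).ne
  have hr2t : r2 ≠ ∞ :=
    (ENNReal.rpow_lt_top_of_nonneg (by positivity)
      (ENNReal.div_lt_top h2'.ne h2B.ne').ne).ne
  set R : ℝ≥0∞ := 1 + r1 + r2 with hR_def
  have hRt : R ≠ ∞ := by
    simp only [hR_def]
    exact ENNReal.add_ne_top.mpr ⟨ENNReal.add_ne_top.mpr ⟨one_ne_top, hr1t⟩, hr2t⟩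
  have hR1 : (1 : ℝ≥0∞) ≤ R := le_self_add.trans le_self_add
  have hR0 : R ≠ 0 := (one_pos.trans_le hR1).ne' 
  refine ⟨R.toReal, ENNReal.toReal_pos hR0 hRt, ?_⟩
  intro f hf _hfin
  rw [ENNReal.ofReal_toReal hRt]
  -- notation
  set N : Set Ω → ℂ → ℝ≥0∞ := fun S k => eLpNorm (fun x => f x - k) q (μ.restrict S) with hN_def
  have hmeas : ∀ (k : ℂ) (ν : Measure Ω), AEStronglyMeasurable (fun x => f x - k) ν :=
    fun k ν => ((hf.sub measurable_const).aestronglyMeasurable)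
  -- key pointwise claim
  have key : ∀ k1 k2 kB : ℂ,
      (⨅ k : ℂ, N (A1 ∪ A2) k) ≤ R * (N A1 k1 + N A2 k2 + N B kB) := by
    intro k1 k2 kB
    -- constant eLpNorm on a set of positive measure
    have const_norm : ∀ (c : ℂ) (S : Set Ω), 0 < μ S →
        eLpNorm (fun _ : Ω => c) q (μ.restrict S) = (‖c‖₊ : ℝ≥0∞) * (μ S) ^ (1 / p) := by
      intro c S hS
      have hne : μ.restrict S ≠ 0 := by
        intro h
        exact hS.ne' (by simpa using congrArg (fun m : Measure Ω => m Set.univ) h)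
      rw [eLpNorm_const c hq0 hne, Measure.restrict_apply_univ, hqp, enorm_eq_nnnorm]
    -- bound on the constant difference over A_i ∩ B
    have const_bound : ∀ (ki kB : ℂ) (A : Set Ω), 0 < μ (A ∩ B) →
        (‖ki - kB‖₊ : ℝ≥0∞) * (μ (A ∩ B)) ^ (1 / p) ≤ N A ki + N B kB := by
      intro ki kB A hAB
      rw [← const_norm _ _ hAB]
      have hfun : (fun _ : Ω => ki - kB) = fun x => (f x - kB) - (f x - ki) := by
        funext x; ring
      rw [hfun]
      calc eLpNorm (fun x => (f x - kB) - (f x - ki)) q (μ.restrict (A ∩ B))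
          ≤ N (A ∩ B) kB + N (A ∩ B) ki :=
            eLpNorm_sub_le (hmeas _ _) (hmeas _ _) hq1
        _ ≤ N B kB + N A ki := by
            gcongr
            · exact eLpNorm_mono_measure _ (Measure.restrict_mono Set.inter_subset_right le_rfl)
            · exact eLpNorm_mono_measure _ (Measure.restrict_mono Set.inter_subset_left le_rfl)
        _ = N A ki + N B kB := add_comm _ _
    -- transfer to the full set A_i
    have absorb : ∀ (ki kB : ℂ) (A : Set Ω) (r : ℝ≥0∞), 0 < μ A → μ A < ∞ → 0 < μ (A ∩ B) →
        r = (μ A / μ (A ∩ B)) ^ (1 / p) →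
        N A kB ≤ N A ki + r * (N A ki + N B kB) := by
      intro ki kB A r hA hA' hAB hr
      have step1 : N A kB ≤ N A ki + eLpNorm (fun _ : Ω => ki - kB) q (μ.restrict A) := by
        have hfun : (fun x => f x - kB) = fun x => (f x - ki) + (ki - kB) := by
          funext x; ring
        simp only [hN_def]
        rw [hfun]
        exact eLpNorm_add_le (hmeas _ _) aestronglyMeasurable_const hq1
      have hABt : μ (A ∩ B) ≠ ∞ := ((measure_mono Set.inter_subset_left).trans_lt hA').ne
      have hsplit : (μ A) ^ (1 / p) = r * (μ (A ∩ B)) ^ (1 / p) := by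
        rw [hr, ← ENNReal.mul_rpow_of_nonneg _ _ (by positivity : (0:ℝ) ≤ 1 / p),
          ENNReal.div_mul_cancel hAB.ne' hABt]
      have step2 : eLpNorm (fun _ : Ω => ki - kB) q (μ.restrict A)
          ≤ r * (N A ki + N B kB) := by
        rw [const_norm _ _ hA, hsplit, ← mul_assoc, mul_comm (‖ki - kB‖₊ : ℝ≥0∞) r, mul_assoc]
        exact mul_le_mul_right (const_bound ki kB A hAB) r
      exact step1.trans (add_le_add_right step2 _)
    have habs1 := absorb k1 kB A1 r1 h1 h1' h1B hr1_def
    have habs2 := absorb k2 kB A2 r2 h2 h2' h2B hr2_def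
    calc (⨅ k : ℂ, N (A1 ∪ A2) k) ≤ N (A1 ∪ A2) kB := iInf_le _ kB
      _ ≤ N A1 kB + N A2 kB := by
          simp only [hN_def]
          rw [Measure.restrict_union hdisj hA2]
          exact eLpNorm_add_measure_le' _ _ _ hq1 hqt
      _ ≤ (N A1 k1 + r1 * (N A1 k1 + N B kB)) + (N A2 k2 + r2 * (N A2 k2 + N B kB)) :=
          add_le_add habs1 habs2
      _ ≤ ((N A1 k1 + N A2 k2 + N B kB) + (r1 * (N A1 k1 + N A2 k2 + N B kB)
            + r2 * (N A1 k1 + N A2 k2 + N B kB))) := by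
          set S := N A1 k1 + N A2 k2 + N B kB with hS
          have e1 : N A1 k1 + N B kB ≤ S := add_le_add_left le_self_add _
          have e2 : N A2 k2 + N B kB ≤ S := add_le_add_left le_add_self _
          calc (N A1 k1 + r1 * (N A1 k1 + N B kB)) + (N A2 k2 + r2 * (N A2 k2 + N B kB))
              ≤ (N A1 k1 + r1 * S) + (N A2 k2 + r2 * S) :=
                add_le_add (add_le_add_right (mul_le_mul_right e1 r1) _)
                  (add_le_add_right (mul_le_mul_right e2 r2) _)
            _ = (N A1 k1 + N A2 k2) + (r1 * S + r2 * S) := add_add_add_comm _ _ _ _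
            _ ≤ S + (r1 * S + r2 * S) := add_le_add_left le_self_add _
      _ = R * (N A1 k1 + N A2 k2 + N B kB) := by
          rw [hR_def]; ring
  -- pass to the infima
  calc (⨅ k : ℂ, N (A1 ∪ A2) k)
      ≤ ⨅ kB : ℂ, ⨅ k2 : ℂ, ⨅ k1 : ℂ, R * (N A1 k1 + N A2 k2 + N B kB) :=
        le_iInf fun kB => le_iInf fun k2 => le_iInf fun k1 => key k1 k2 kB
    _ = R * ((⨅ k : ℂ, N A1 k) + (⨅ k : ℂ, N A2 k) + (⨅ k : ℂ, N B k)) := by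
        simp only [ENNReal.iInf_add, ENNReal.add_iInf, ENNReal.mul_iInf_of_ne hR0 hRt]
end

section
/- Let (Ω,Σ,μ) be a σ-finite measure space and (Π_k)_{k≥1} a sequence of countable measurable partitions of Ω into atoms of positive finite measure such that Π_{k+1} refines Π_k for every k, and let E_k f = Σ_{A∈Π_k} (μ(A)^{-1}∫_A f dμ)·1_A. Assume the filtration is regular with constant c ≥ 1: for every k ≥ 2 and every A ∈ Π_k, the unique atom Â ∈ Π_{k−1} containing A satisfies μ(Â) ≤ c·μ(A). Then for every f ∈ L_2(μ) and every k ≥ 2: ess sup_Ω E_k(|f − E_{k−1}f|²) ≤ (1 + c)·sup_{j≥1} ess sup_Ω E_j(|f − E_j f|²). -/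
open MeasureTheory ENNReal

section Aux

variable {Ω : Type*} {m : MeasurableSpace Ω} {μ : Measure Ω}

lemma AtomicPartition.condExp_eq_on {E : Type*} [NormedAddCommGroup E] [NormedSpace ℝ E]
    (Q : AtomicPartition μ) (g : Ω → E) {i : Q.ι} {x : Ω} (hx : x ∈ Q.atom i) :
    Q.condExp g x = (μ (Q.atom i)).toReal⁻¹ • ∫ y in Q.atom i, g y ∂μ := by
  unfold AtomicPartition.condExp
  rw [tsum_eq_single i ?_]
  · exact Set.indicator_of_mem hx _
  · intro j hj
    exact Set.indicator_of_notMem (fun hxj => (Q.disjoint hj).le_bot ⟨hxj, hx⟩) _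

lemma AtomicPartition.avg_le_eLpNormTop (Q : AtomicPartition μ) (g : Ω → ℝ) (i : Q.ι) :
    ENNReal.ofReal ((μ (Q.atom i)).toReal⁻¹ * ∫ y in Q.atom i, g y ∂μ)
      ≤ eLpNorm (Q.condExp g) ∞ μ := by
  rw [eLpNorm_exponent_top, eLpNormEssSup]
  have hae := ENNReal.ae_le_essSup (f := fun x => ‖Q.condExp g x‖ₑ) (μ := μ)
  obtain ⟨x, hx, hle⟩ : ∃ x ∈ Q.atom i,
      ‖Q.condExp g x‖ₑ ≤ essSup (fun x => ‖Q.condExp g x‖ₑ) μ := by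
    by_contra hcon
    push_neg at hcon
    have hsub : Q.atom i ⊆ {x | ¬ ‖Q.condExp g x‖ₑ ≤
        essSup (fun x => ‖Q.condExp g x‖ₑ) μ} :=
      fun x hx => (hcon x hx).not_ge
    exact (Q.pos i).ne' (measure_mono_null hsub (MeasureTheory.ae_iff.1 hae))
  refine le_trans ?_ hle
  rw [Q.condExp_eq_on g hx, smul_eq_mul]
  exact (Real.enorm_eq_ofReal_abs _).symm ▸ ENNReal.ofReal_le_ofReal (le_abs_self _)

end Aux

/-- `BMO ≲ bmo` for regular atomic filtrations.  If `(Π_k)` is a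
refining sequence of atomic partitions which is regular with constant `c` (each parent
atom has measure at most `c` times that of its child), then for every `f ∈ L₂(μ)` and
every level `k`,
`ess sup E_{k+1}(|f - E_k f|²) ≤ (1+c) · sup_j ess sup E_j(|f - E_j f|²)`. -/
theorem statement10 {Ω : Type*} [MeasurableSpace Ω] (μ : Measure Ω) [SigmaFinite μ]
    (P : ℕ → AtomicPartition μ)
    (href : ∀ k, ∀ i : (P (k + 1)).ι, ∃ i' : (P k).ι,
      (P (k + 1)).atom i ⊆ (P k).atom i')
    (c : ℝ) (hc : 1 ≤ c)
    (hreg : ∀ k, ∀ i : (P (k + 1)).ι, ∀ i' : (P k).ι,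
      (P (k + 1)).atom i ⊆ (P k).atom i' →
      μ ((P k).atom i') ≤ ENNReal.ofReal c * μ ((P (k + 1)).atom i)) :
    ∀ f : Ω → ℂ, MemLp f 2 μ → ∀ k : ℕ,
      eLpNorm ((P (k + 1)).condExp fun y => ‖f y - (P k).condExp f y‖ ^ 2) ∞ μ
        ≤ ENNReal.ofReal (1 + c) *
          ⨆ j : ℕ, eLpNorm ((P j).condExp fun y => ‖f y - (P j).condExp f y‖ ^ 2) ∞ μ := by
  intro f hf k
  set g : Ω → ℝ := fun y => ‖f y - (P k).condExp f y‖ ^ 2 with hgdef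
  set M : ℝ≥0∞ :=
    ⨆ j : ℕ, eLpNorm ((P j).condExp fun y => ‖f y - (P j).condExp f y‖ ^ 2) ∞ μ with hM
  rw [eLpNorm_exponent_top, eLpNormEssSup]
  refine essSup_le_of_ae_le _ (Filter.Eventually.of_forall fun x => ?_)
  have hxU : x ∈ ⋃ i, (P (k + 1)).atom i := (P (k + 1)).cover ▸ Set.mem_univ x
  obtain ⟨i, hi⟩ := Set.mem_iUnion.1 hxU
  obtain ⟨i', hsub⟩ := href k i
  set A : Set Ω := (P (k + 1)).atom i with hA
  set B : Set Ω := (P k).atom i' with hB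
  have hA0 : μ A ≠ 0 := ((P (k + 1)).pos i).ne'
  have hAt : μ A ≠ ∞ := ((P (k + 1)).lt_top i).ne
  have hB0 : μ B ≠ 0 := ((P k).pos i').ne'
  have hBt : μ B ≠ ∞ := ((P k).lt_top i').ne
  -- integrability of g on B
  have hfin : IsFiniteMeasure (μ.restrict B) :=
    ⟨by rw [Measure.restrict_apply_univ]; exact (P k).lt_top i'⟩
  have hInt : IntegrableOn g B μ := by
    set cB : ℂ := (μ B).toReal⁻¹ • ∫ y in B, f y ∂μ with hcB
    have h1 : MemLp (fun y => f y - cB) 2 (μ.restrict B) :=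
      (hf.restrict B).sub (memLp_const cB)
    have h2 : Integrable (fun y => ‖f y - cB‖ ^ 2) (μ.restrict B) := h1.norm.integrable_sq
    refine IntegrableOn.congr_fun h2 (fun y hy => ?_) ((P k).measurableSet i')
    simp only [g, (P k).condExp_eq_on f hy, hcB, B]
  have hgnn : ∀ y, (0:ℝ) ≤ g y := fun y => sq_nonneg _
  have hABle : ∫ y in A, g y ∂μ ≤ ∫ y in B, g y ∂μ :=
    setIntegral_mono_set hInt (Filter.Eventually.of_forall hgnn) (hsub.eventuallyLE)
  have hAnn : (0:ℝ) ≤ ∫ y in A, g y ∂μ :=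
    setIntegral_nonneg ((P (k + 1)).measurableSet i) fun y _ => hgnn y
  -- rewrite the value at x
  show ‖(P (k + 1)).condExp g x‖ₑ ≤ ENNReal.ofReal (1 + c) * M
  rw [(P (k + 1)).condExp_eq_on g hi, smul_eq_mul,
    Real.enorm_eq_ofReal (mul_nonneg (inv_nonneg.2 ENNReal.toReal_nonneg) hAnn),
    ENNReal.ofReal_mul (inv_nonneg.2 ENNReal.toReal_nonneg)]
  have hinvA : ENNReal.ofReal (μ A).toReal⁻¹ = (μ A)⁻¹ := by
    rw [← ENNReal.toReal_inv, ENNReal.ofReal_toReal (ENNReal.inv_ne_top.2 hA0)]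
  rw [hinvA]
  -- the bmo bound on atom B
  have hbmo : ENNReal.ofReal ((μ B).toReal⁻¹ * ∫ y in B, g y ∂μ) ≤ M :=
    le_trans ((P k).avg_le_eLpNormTop g i') (le_iSup
      (fun j => eLpNorm ((P j).condExp fun y => ‖f y - (P j).condExp f y‖ ^ 2) ∞ μ) k)
  have hBint : ENNReal.ofReal (∫ y in B, g y ∂μ) ≤ μ B * M := by
    have heq : ENNReal.ofReal (∫ y in B, g y ∂μ)
        = μ B * ENNReal.ofReal ((μ B).toReal⁻¹ * ∫ y in B, g y ∂μ) := by
      rw [ENNReal.ofReal_mul (inv_nonneg.2 ENNReal.toReal_nonneg), ← ENNReal.toReal_inv,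
        ENNReal.ofReal_toReal (ENNReal.inv_ne_top.2 hB0), ← mul_assoc,
        ENNReal.mul_inv_cancel hB0 hBt, one_mul]
    rw [heq]
    exact mul_le_mul_right hbmo _
  have hreg' : μ B ≤ ENNReal.ofReal c * μ A := hreg k i i' hsub
  calc (μ A)⁻¹ * ENNReal.ofReal (∫ y in A, g y ∂μ)
      ≤ (μ A)⁻¹ * (μ B * M) :=
        mul_le_mul_right (le_trans (ENNReal.ofReal_le_ofReal hABle) hBint) _
    _ ≤ (μ A)⁻¹ * (ENNReal.ofReal c * μ A * M) :=
        mul_le_mul_right (mul_le_mul_left hreg' M) _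
    _ = ENNReal.ofReal c * M := by
        rw [mul_comm (ENNReal.ofReal c) (μ A), mul_assoc, ← mul_assoc,
          ENNReal.inv_mul_cancel hA0 hAt, one_mul]
    _ ≤ ENNReal.ofReal (1 + c) * M :=
        mul_le_mul_left (ENNReal.ofReal_le_ofReal (by linarith)) M
end

section
/- Let (Ω,d) be a metric space with a Borel measure μ, let α > 1, let T : L_2(μ) → L_2(μ) be a bounded linear operator with operator norm ‖T‖, and let k : Ω × Ω → ℂ be measurable. Assume: (kernel representation) for every open ball B = B(x_0,r) and every f ∈ L_2(μ) ∩ L_∞(μ) vanishing μ-a.e. on B(x_0,αr), one has Tf(z) = ∫_Ω k(z,y)f(y) dμ(y) for μ-a.e. z ∈ B; (Hörmander condition) there is H ≥ 0 such that for every open ball B = B(x_0,r) and all z_1, z_2 ∈ B, ∫_{Ω∖B(x_0,αr)} |k(z_1,x) − k(z_2,x)| dμ(x) ≤ H. Then for every β > 0, every open ball B = B(x_0,r) with 0 < μ(B) and μ(B(x_0,αr)) ≤ β·μ(B) < ∞, and every f ∈ L_2(μ) ∩ L_∞(μ): inf_{c∈ℂ} (1/μ(B)) ∫_B |Tf − c|²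 dμ ≤ (‖T‖·√β + H)²·‖f‖_{L_∞(μ)}². -/
open MeasureTheory ENNReal

private lemma sq_rpow_half (Y : ℝ≥0∞) : (Y ^ 2) ^ (1/2 : ℝ) = Y := by
  rw [← ENNReal.rpow_natCast Y 2, ← ENNReal.rpow_mul]
  norm_num

private lemma rpow_half_sq (Y : ℝ≥0∞) : (Y ^ (1/2 : ℝ)) ^ 2 = Y := by
  rw [← ENNReal.rpow_natCast _ 2, ← ENNReal.rpow_mul]
  norm_num

private lemma le_rpow_half {X Y : ℝ≥0∞} (h : X ^ 2 ≤ Y) : X ≤ Y ^ (1/2 : ℝ) := by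
  have h2 := ENNReal.rpow_le_rpow (x := X ^ 2) (y := Y) (z := 1/2) h (by norm_num)
  rwa [sq_rpow_half] at h2

private lemma sq_eLpNorm_two {Ω : Type*} [MeasurableSpace Ω] (ν : Measure Ω) (g : Ω → ℂ) :
    (eLpNorm g 2 ν) ^ 2 = ∫⁻ x, (‖g x‖₊ : ℝ≥0∞) ^ 2 ∂ν := by
  rw [eLpNorm_eq_lintegral_rpow_enorm_toReal (by norm_num) (by norm_num), ENNReal.toReal_ofNat,
    ← ENNReal.rpow_natCast _ 2, ← ENNReal.rpow_mul]
  norm_num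
  rfl

/-- `L_∞ →` DBMO for Calderón–Zygmund operators.  Let `T` be
`L₂(μ)`-bounded with a kernel `k` satisfying the Hörmander condition with constant `H`
relative to `α`-dilated balls.  Then for every ball `B` with `0 < μ(B)` and
`μ(αB) ≤ β·μ(B) < ∞`, and every `f ∈ L₂ ∩ L_∞`,
`inf_c (1/μ(B)) ∫_B |Tf - c|² dμ ≤ (‖T‖√β + H)² ‖f‖_∞²`. -/
theorem statement11 {Ω : Type*} [MetricSpace Ω] [MeasurableSpace Ω] [BorelSpace Ω]
    (μ : Measure Ω) (α : ℝ) (hα : 1 < α)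
    (T : Lp ℂ 2 μ →L[ℂ] Lp ℂ 2 μ) (k : Ω → Ω → ℂ)
    (hk : Measurable (Function.uncurry k)) (H : ℝ) (hH : 0 ≤ H)
    (hrep : ∀ (x₀ : Ω) (r : ℝ) (f : Ω → ℂ) (hf2 : MemLp f 2 μ), MemLp f ∞ μ →
      (∀ᵐ x ∂μ.restrict (Metric.ball x₀ (α * r)), f x = 0) →
      (T (hf2.toLp f) : Ω → ℂ) =ᵐ[μ.restrict (Metric.ball x₀ r)]
        fun z => ∫ y, k z y * f y ∂μ)
    (hHor : ∀ (x₀ : Ω) (r : ℝ), ∀ z₁ ∈ Metric.ball x₀ r, ∀ z₂ ∈ Metric.ball x₀ r,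
      ∫⁻ x in (Metric.ball x₀ (α * r))ᶜ, (‖k z₁ x - k z₂ x‖₊ : ℝ≥0∞) ∂μ
        ≤ ENNReal.ofReal H) :
    ∀ β : ℝ, 0 < β → ∀ (x₀ : Ω) (r : ℝ), 0 < μ (Metric.ball x₀ r) →
      μ (Metric.ball x₀ (α * r)) ≤ ENNReal.ofReal β * μ (Metric.ball x₀ r) →
      μ (Metric.ball x₀ r) < ∞ →
      ∀ (f : Ω → ℂ) (hf2 : MemLp f 2 μ), MemLp f ∞ μ →
        (⨅ c : ℂ, (μ (Metric.ball x₀ r))⁻¹ *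
            ∫⁻ x in Metric.ball x₀ r, (‖(T (hf2.toLp f) : Ω → ℂ) x - c‖₊ : ℝ≥0∞) ^ 2 ∂μ)
          ≤ ENNReal.ofReal ((‖T‖ * Real.sqrt β + H) ^ 2) * eLpNorm f ∞ μ ^ 2 := by
  intro β hβ x₀ r hB0 hβB hBtop f hf2 hfi
  classical
  set B := Metric.ball x₀ r with hBdef
  set A := Metric.ball x₀ (α * r) with hAdef
  have hBmeas : MeasurableSet B := measurableSet_ball
  have hAmeas : MeasurableSet A := measurableSet_ball
  obtain ⟨z₂, hz₂⟩ : B.Nonempty := nonempty_of_measure_ne_zero hB0.ne'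
  set M : ℝ≥0∞ := eLpNorm f ∞ μ with hMdef
  have hMlt : M < ∞ := hfi.2
  have hfM : ∀ᵐ x ∂μ, (‖f x‖₊ : ℝ≥0∞) ≤ M := by
    rw [hMdef, eLpNorm_exponent_top]
    exact ae_le_eLpNormEssSup
  set f₁ := A.indicator f with hf₁def
  set f₂ := Aᶜ.indicator f with hf₂def
  have h1 : MemLp f₁ 2 μ := hf2.indicator hAmeas
  have h2 : MemLp f₂ 2 μ := hf2.indicator hAmeas.compl
  have h2i : MemLp f₂ ∞ μ := hfi.indicator hAmeas.compl
  have hsplit : f₁ + f₂ = f := by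
    funext x
    by_cases hx : x ∈ A <;>
      simp [hf₁def, hf₂def, Set.indicator_apply, hx]
  have hvan : ∀ᵐ x ∂μ.restrict A, f₂ x = 0 := by
    filter_upwards [ae_restrict_mem hAmeas] with x hx
    simp [hf₂def, Set.indicator_apply, hx]
  have hker_meas : ∀ z : Ω, Measurable (k z) := fun z => hk.comp measurable_prodMk_left
  -- pointwise lintegral bound for the kernel difference against `f₂`
  have hbound : ∀ z ∈ B, ∫⁻ y, (‖(k z y - k z₂ y) * f₂ y‖₊ : ℝ≥0∞) ∂μ
      ≤ ENNReal.ofReal H * M := by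
    intro z hz
    have hpt : ∀ᵐ y ∂μ, (‖(k z y - k z₂ y) * f₂ y‖₊ : ℝ≥0∞)
        ≤ Aᶜ.indicator (fun y => (‖k z y - k z₂ y‖₊ : ℝ≥0∞)) y * M := by
      filter_upwards [hfM] with y hy
      by_cases hyA : y ∈ Aᶜ
      · rw [Set.indicator_of_mem hyA]
        calc (‖(k z y - k z₂ y) * f₂ y‖₊ : ℝ≥0∞)
            = (‖k z y - k z₂ y‖₊ : ℝ≥0∞) * ‖f₂ y‖₊ := by
              rw [nnnorm_mul, ENNReal.coe_mul]
          _ ≤ (‖k z y - k z₂ y‖₊ : ℝ≥0∞) * M := by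
              refine mul_le_mul_right ?_ _
              rw [hf₂def, Set.indicator_of_mem hyA]
              exact hy
      · rw [Set.indicator_of_notMem hyA]
        simp [hf₂def, Set.indicator_of_notMem hyA]
    have hmeas : Measurable (Aᶜ.indicator (fun y => (‖k z y - k z₂ y‖₊ : ℝ≥0∞))) :=
      (((hker_meas z).sub (hker_meas z₂)).nnnorm.coe_nnreal_ennreal).indicator hAmeas.compl
    calc ∫⁻ y, (‖(k z y - k z₂ y) * f₂ y‖₊ : ℝ≥0∞) ∂μ
        ≤ ∫⁻ y, Aᶜ.indicator (fun y => (‖k z y - k z₂ y‖₊ : ℝ≥0∞)) y * M ∂μ :=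
          lintegral_mono_ae hpt
      _ = (∫⁻ y, Aᶜ.indicator (fun y => (‖k z y - k z₂ y‖₊ : ℝ≥0∞)) y ∂μ) * M :=
          lintegral_mul_const M hmeas
      _ = (∫⁻ y in Aᶜ, (‖k z y - k z₂ y‖₊ : ℝ≥0∞) ∂μ) * M := by
          rw [lintegral_indicator hAmeas.compl]
      _ ≤ ENNReal.ofReal H * M := mul_le_mul_left (hHor x₀ r z hz z₂ hz₂) M
  have hint : ∀ z ∈ B, Integrable (fun y => (k z y - k z₂ y) * f₂ y) μ := by
    intro z hz
    refine ⟨(((hker_meas z).sub (hker_meas z₂)).aestronglyMeasurable.mul h2.1), ?_⟩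
    exact lt_of_le_of_lt (hbound z hz)
      (ENNReal.mul_lt_top ENNReal.ofReal_lt_top hMlt)
  set c := ∫ y, k z₂ y * f₂ y ∂μ with hcdef
  have hker : ∀ z ∈ B, (‖(∫ y, k z y * f₂ y ∂μ) - c‖₊ : ℝ≥0∞) ≤ ENNReal.ofReal H * M := by
    intro z hz
    by_cases hI : Integrable (fun y => k z y * f₂ y) μ
    · have hI2 : Integrable (fun y => k z₂ y * f₂ y) μ := by
        exact (hI.sub (hint z hz)).congr (ae_of_all μ fun y => by
          simp only [Pi.sub_apply]; ring)
      have heq : (∫ y, k z y * f₂ y ∂μ) - c = ∫ y, (k z y - k z₂ y) * f₂ y ∂μ := by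
        rw [hcdef, ← integral_sub hI hI2]
        congr 1; funext y; ring
      rw [heq]
      exact le_trans (enorm_integral_le_lintegral_enorm _) (hbound z hz)
    · have hI2 : ¬ Integrable (fun y => k z₂ y * f₂ y) μ := by
        intro h'
        exact hI ((h'.add (hint z hz)).congr (ae_of_all μ fun y => by
          simp only [Pi.add_apply]; ring))
      rw [hcdef, integral_undef hI, integral_undef hI2]
      simp
  -- decompose T f
  have hTsplit : (T (hf2.toLp f) : Ω → ℂ) =ᵐ[μ]
      fun x => (T (h1.toLp f₁) : Ω → ℂ) x + (T (h2.toLp f₂) : Ω → ℂ) x := by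
    have hLp : hf2.toLp f = h1.toLp f₁ + h2.toLp f₂ := by
      rw [← MemLp.toLp_add h1 h2]
      exact (MemLp.toLp_eq_toLp_iff _ _).mpr (by rw [hsplit])
    rw [hLp, map_add]
    exact Lp.coeFn_add _ _
  -- a.e. bound on `B` for the second piece
  have hG2 : ∀ᵐ x ∂μ.restrict B, (‖(T (h2.toLp f₂) : Ω → ℂ) x - c‖₊ : ℝ≥0∞)
      ≤ ENNReal.ofReal H * M := by
    filter_upwards [hrep x₀ r f₂ h2 h2i hvan, ae_restrict_mem hBmeas] with x hx hxB
    rw [hx]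
    exact hker x hxB
  have hE2sq : (eLpNorm (fun x => (T (h2.toLp f₂) : Ω → ℂ) x - c) 2 (μ.restrict B)) ^ 2
      ≤ (ENNReal.ofReal H * M) ^ 2 * μ B := by
    rw [sq_eLpNorm_two]
    calc ∫⁻ x, (‖(T (h2.toLp f₂) : Ω → ℂ) x - c‖₊ : ℝ≥0∞) ^ 2 ∂μ.restrict B
        ≤ ∫⁻ _x, (ENNReal.ofReal H * M) ^ 2 ∂μ.restrict B :=
          lintegral_mono_ae (hG2.mono fun x hx => pow_le_pow_left₀ (zero_le) hx 2)
      _ = (ENNReal.ofReal H * M) ^ 2 * μ B := by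
          rw [lintegral_const, Measure.restrict_apply_univ]
  have hE2 : eLpNorm (fun x => (T (h2.toLp f₂) : Ω → ℂ) x - c) 2 (μ.restrict B)
      ≤ ENNReal.ofReal H * M * (μ B) ^ (1/2 : ℝ) := by
    refine le_trans (le_rpow_half hE2sq) ?_
    rw [ENNReal.mul_rpow_of_nonneg _ _ (by norm_num : (0:ℝ) ≤ 1/2), sq_rpow_half]
  -- first piece
  have hf1sq : (eLpNorm f₁ 2 μ) ^ 2 ≤ M ^ 2 * (ENNReal.ofReal β * μ B) := by
    rw [sq_eLpNorm_two μ f₁]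
    have hpt : ∀ᵐ x ∂μ, (‖f₁ x‖₊ : ℝ≥0∞) ^ 2 ≤ A.indicator (fun _ => M ^ 2) x := by
      filter_upwards [hfM] with x hx
      by_cases hxA : x ∈ A
      · rw [Set.indicator_of_mem hxA, hf₁def, Set.indicator_of_mem hxA]
        exact pow_le_pow_left₀ (zero_le) hx 2
      · simp [hf₁def, Set.indicator_of_notMem hxA]
    calc ∫⁻ x, (‖f₁ x‖₊ : ℝ≥0∞) ^ 2 ∂μ
        ≤ ∫⁻ x, A.indicator (fun _ => M ^ 2) x ∂μ := lintegral_mono_ae hpt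
      _ = M ^ 2 * μ A := by
          rw [lintegral_indicator hAmeas, setLIntegral_const]
      _ ≤ M ^ 2 * (ENNReal.ofReal β * μ B) := mul_le_mul_right hβB _
  have hE1 : eLpNorm ((T (h1.toLp f₁) : Ω → ℂ)) 2 (μ.restrict B)
      ≤ ENNReal.ofReal (‖T‖ * Real.sqrt β) * M * (μ B) ^ (1/2 : ℝ) := by
    have step1 : eLpNorm ((T (h1.toLp f₁) : Ω → ℂ)) 2 (μ.restrict B)
        ≤ eLpNorm ((T (h1.toLp f₁) : Ω → ℂ)) 2 μ :=
      eLpNorm_mono_measure _ Measure.restrict_le_self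
    have step2 : eLpNorm ((T (h1.toLp f₁) : Ω → ℂ)) 2 μ = (‖T (h1.toLp f₁)‖₊ : ℝ≥0∞) :=
      (Lp.enorm_def _).symm
    have step3 : (‖T (h1.toLp f₁)‖₊ : ℝ≥0∞) ≤ (‖T‖₊ : ℝ≥0∞) * eLpNorm f₁ 2 μ := by
      rw [← Lp.enorm_toLp h1, enorm_eq_nnnorm, ← ENNReal.coe_mul]
      exact_mod_cast T.le_opNNNorm _
    have step4 : eLpNorm f₁ 2 μ ≤ (M ^ 2 * (ENNReal.ofReal β * μ B)) ^ (1/2 : ℝ) :=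
      le_rpow_half hf1sq
    have step5 : (M ^ 2 * (ENNReal.ofReal β * μ B)) ^ (1/2 : ℝ)
        = M * (ENNReal.ofReal (Real.sqrt β) * (μ B) ^ (1/2 : ℝ)) := by
      rw [ENNReal.mul_rpow_of_nonneg _ _ (by norm_num : (0:ℝ) ≤ 1/2),
        ENNReal.mul_rpow_of_nonneg _ _ (by norm_num : (0:ℝ) ≤ 1/2), sq_rpow_half,
        ENNReal.ofReal_rpow_of_nonneg hβ.le (by norm_num : (0:ℝ) ≤ 1/2),
        Real.sqrt_eq_rpow]
    calc eLpNorm ((T (h1.toLp f₁) : Ω → ℂ)) 2 (μ.restrict B)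
        ≤ (‖T‖₊ : ℝ≥0∞) * eLpNorm f₁ 2 μ := by
          rw [← step2] at step3
          exact le_trans step1 step3
      _ ≤ (‖T‖₊ : ℝ≥0∞) * (M * (ENNReal.ofReal (Real.sqrt β) * (μ B) ^ (1/2 : ℝ))) := by
          rw [← step5]
          exact mul_le_mul_right step4 _
      _ = ENNReal.ofReal (‖T‖ * Real.sqrt β) * M * (μ B) ^ (1/2 : ℝ) := by
          rw [ENNReal.ofReal_mul (norm_nonneg T), ofReal_norm, enorm_eq_nnnorm]
          ring
  -- combine via Minkowski
  have hsum : eLpNorm (fun x => (T (hf2.toLp f) : Ω → ℂ) x - c) 2 (μ.restrict B)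
      ≤ ENNReal.ofReal (‖T‖ * Real.sqrt β + H) * M * (μ B) ^ (1/2 : ℝ) := by
    have hcongr : (fun x => (T (hf2.toLp f) : Ω → ℂ) x - c) =ᵐ[μ.restrict B]
        (fun x => (T (h1.toLp f₁) : Ω → ℂ) x)
          + fun x => ((T (h2.toLp f₂) : Ω → ℂ) x - c) := by
      filter_upwards [ae_restrict_of_ae hTsplit] with x hx
      simp only [Pi.add_apply]
      rw [hx]
      ring
    rw [eLpNorm_congr_ae hcongr]
    refine le_trans (eLpNorm_add_le ((Lp.aestronglyMeasurable _).restrict)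
      (((Lp.aestronglyMeasurable _).sub aestronglyMeasurable_const).restrict)
      (by norm_num)) ?_
    calc eLpNorm ((T (h1.toLp f₁) : Ω → ℂ)) 2 (μ.restrict B)
          + eLpNorm (fun x => (T (h2.toLp f₂) : Ω → ℂ) x - c) 2 (μ.restrict B)
        ≤ ENNReal.ofReal (‖T‖ * Real.sqrt β) * M * (μ B) ^ (1/2 : ℝ)
          + ENNReal.ofReal H * M * (μ B) ^ (1/2 : ℝ) := add_le_add hE1 hE2
      _ = ENNReal.ofReal (‖T‖ * Real.sqrt β + H) * M * (μ B) ^ (1/2 : ℝ) := by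
          rw [ENNReal.ofReal_add (mul_nonneg (norm_nonneg T) (Real.sqrt_nonneg β)) hH]
          ring
  refine le_trans (iInf_le _ c) ?_
  have hQ : ∫⁻ x in B, (‖(T (hf2.toLp f) : Ω → ℂ) x - c‖₊ : ℝ≥0∞) ^ 2 ∂μ
      ≤ ENNReal.ofReal ((‖T‖ * Real.sqrt β + H) ^ 2) * M ^ 2 * μ B := by
    calc ∫⁻ x in B, (‖(T (hf2.toLp f) : Ω → ℂ) x - c‖₊ : ℝ≥0∞) ^ 2 ∂μ
        = (eLpNorm (fun x => (T (hf2.toLp f) : Ω → ℂ) x - c) 2 (μ.restrict B)) ^ 2 :=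
          (sq_eLpNorm_two _ _).symm
      _ ≤ (ENNReal.ofReal (‖T‖ * Real.sqrt β + H) * M * (μ B) ^ (1/2 : ℝ)) ^ 2 :=
          pow_le_pow_left₀ (zero_le) hsum 2
      _ = ENNReal.ofReal ((‖T‖ * Real.sqrt β + H) ^ 2) * M ^ 2 * μ B := by
          rw [mul_pow, mul_pow, rpow_half_sq (μ B),
            ← ENNReal.ofReal_pow (by positivity)]
  calc (μ B)⁻¹ * ∫⁻ x in B, (‖(T (hf2.toLp f) : Ω → ℂ) x - c‖₊ : ℝ≥0∞) ^ 2 ∂μ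
      ≤ (μ B)⁻¹ * (ENNReal.ofReal ((‖T‖ * Real.sqrt β + H) ^ 2) * M ^ 2 * μ B) :=
        mul_le_mul_right hQ _
    _ = ENNReal.ofReal ((‖T‖ * Real.sqrt β + H) ^ 2) * M ^ 2 := by
        rw [mul_comm ((μ B)⁻¹), mul_assoc, ENNReal.mul_inv_cancel hB0.ne' hBtop.ne, mul_one]
end

section
/- Let (Ω,Σ,μ) be a measure space, T : L_2(μ) → L_2(μ) a bounded linear operator with operator norm ‖T‖, k : Ω×Ω → ℂ measurable, and Q ⊆ Q̂ measurable sets with 0 < μ(Q) and μ(Q̂) ≤ c_0·μ(Q) < ∞ for some c_0 ≥ 1. Assume: (kernel representation) for every f ∈ L_2(μ) ∩ L_∞(μ) vanishing μ-a.e. on Q̂, one has Tf(z) = ∫_Ω k(z,y)f(y) dμ(y) for μ-a.e. z ∈ Q; (atomic Hörmander condition) there is H ≥ 0 such that for all z_1, z_2 ∈ Q, ∫_{Ω∖Q̂} |k(z_1,x) − k(z_2,x)| dμ(x) ≤ H. Then for every f ∈ L_2(μ) ∩ L_∞(μ): inf_{c∈ℂ} (1/μ(Q)) ∫_Q |Tf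 − c|² dμ ≤ (‖T‖·√c_0 + H)²·‖f‖_{L_∞(μ)}². -/
open MeasureTheory ENNReal

/-- `L_∞ →` bmo for atomic Calderón–Zygmund operators.  Let `T` be
`L₂(μ)`-bounded with a kernel `k` satisfying the atomic Hörmander condition with constant
`H` relative to a pair of sets `Q ⊆ Q̂` with `μ(Q̂) ≤ c₀·μ(Q) < ∞`.  Then for every
`f ∈ L₂ ∩ L_∞`, `inf_c (1/μ(Q)) ∫_Q |Tf - c|² dμ ≤ (‖T‖√c₀ + H)² ‖f‖_∞²`. -/
theorem statement12 {Ω : Type*} [MeasurableSpace Ω] (μ : Measure Ω)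
    (T : Lp ℂ 2 μ →L[ℂ] Lp ℂ 2 μ) (k : Ω → Ω → ℂ)
    (hk : Measurable (Function.uncurry k)) (Q Qhat : Set Ω)
    (hQmeas : MeasurableSet Q) (hQhatmeas : MeasurableSet Qhat) (hQQ : Q ⊆ Qhat)
    (c₀ : ℝ) (hc₀ : 1 ≤ c₀) (hQpos : 0 < μ Q)
    (hdoubling : μ Qhat ≤ ENNReal.ofReal c₀ * μ Q) (hQfin : μ Q < ∞)
    (H : ℝ) (hH : 0 ≤ H)
    (hrep : ∀ (f : Ω → ℂ) (hf2 : MemLp f 2 μ), MemLp f ∞ μ →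
      (∀ᵐ x ∂μ.restrict Qhat, f x = 0) →
      (T (hf2.toLp f) : Ω → ℂ) =ᵐ[μ.restrict Q] fun z => ∫ y, k z y * f y ∂μ)
    (hHor : ∀ z₁ ∈ Q, ∀ z₂ ∈ Q,
      ∫⁻ x in Qhatᶜ, (‖k z₁ x - k z₂ x‖₊ : ℝ≥0∞) ∂μ ≤ ENNReal.ofReal H) :
    ∀ (f : Ω → ℂ) (hf2 : MemLp f 2 μ), MemLp f ∞ μ →
      (⨅ c : ℂ, (μ Q)⁻¹ * ∫⁻ x in Q, (‖(T (hf2.toLp f) : Ω → ℂ) x - c‖₊ : ℝ≥0∞) ^ 2 ∂μ)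
        ≤ ENNReal.ofReal ((‖T‖ * Real.sqrt c₀ + H) ^ 2) * eLpNorm f ∞ μ ^ 2 := by
  intro f hf2 hfinf
  set N := eLpNorm f ∞ μ with hN
  have hNlt : N < ∞ := hfinf.2
  set Mr : ℝ := N.toReal with hMrdef
  have hMr0 : 0 ≤ Mr := ENNReal.toReal_nonneg
  have hofMr : ENNReal.ofReal Mr = N := ENNReal.ofReal_toReal hNlt.ne
  have hfbd : ∀ᵐ y ∂μ, ‖f y‖ ≤ Mr := by
    filter_upwards [ae_le_eLpNormEssSup (f := f) (μ := μ)] with y hy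
    have : (‖f y‖₊ : ℝ≥0∞) ≤ N := by
      rw [hN, eLpNorm_exponent_top]; exact hy
    have h2 := ENNReal.toReal_mono hNlt.ne this
    simpa using h2
  -- split f
  set f1 : Ω → ℂ := Qhat.indicator f with hf1def
  set fc : Ω → ℂ := Qhatᶜ.indicator f with hfcdef
  have h1 : MemLp f1 2 μ := hf2.indicator hQhatmeas
  have h2 : MemLp fc 2 μ := hf2.indicator hQhatmeas.compl
  have h2inf : MemLp fc ∞ μ := hfinf.indicator hQhatmeas.compl
  have hsplit : f1 + fc = f := Set.indicator_self_add_compl Qhat f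
  have htoLp : hf2.toLp f = h1.toLp f1 + h2.toLp fc := by
    rw [← MemLp.toLp_add]
    exact MemLp.toLp_congr _ _ (by rw [hsplit])
  set g : Ω → ℂ := (T (hf2.toLp f) : Ω → ℂ) with hgdef
  set g1 : Ω → ℂ := (T (h1.toLp f1) : Ω → ℂ) with hg1def
  set g2 : Ω → ℂ := (T (h2.toLp fc) : Ω → ℂ) with hg2def
  have hg_decomp : g =ᵐ[μ] g1 + g2 := by
    rw [hgdef, htoLp, map_add]
    exact Lp.coeFn_add _ _
  have hfc0 : ∀ᵐ x ∂μ.restrict Qhat, fc x = 0 := by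
    filter_upwards [ae_restrict_mem hQhatmeas] with x hx
    exact Set.indicator_of_notMem (by simpa using hx) f
  have hrep2 : g2 =ᵐ[μ.restrict Q] fun z => ∫ y, k z y * fc y ∂μ :=
    hrep fc h2 h2inf hfc0
  obtain ⟨z₀, hz₀⟩ := nonempty_of_measure_ne_zero hQpos.ne'
  set φ : Ω → ℂ := fun z => ∫ y, k z y * fc y ∂μ with hφdef
  set c : ℂ := φ z₀ with hcdef
  have hkz : ∀ z, Measurable fun y => k z y := fun z => hk.comp measurable_prodMk_left
  have hfcaesm : AEStronglyMeasurable fc μ := hf2.1.indicator hQhatmeas.compl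
  -- lintegral bound for the difference kernel times fc
  have hDlint : ∀ z ∈ Q, ∫⁻ y, (‖(k z y - k z₀ y) * fc y‖₊ : ℝ≥0∞) ∂μ
      ≤ ENNReal.ofReal Mr * ENNReal.ofReal H := by
    intro z hz
    have hb : ∀ᵐ y ∂μ, (‖(k z y - k z₀ y) * fc y‖₊ : ℝ≥0∞)
        ≤ Qhatᶜ.indicator (fun y => ENNReal.ofReal Mr * (‖k z y - k z₀ y‖₊ : ℝ≥0∞)) y := by
      filter_upwards [hfbd] with y hy
      by_cases hyQ : y ∈ Qhatᶜ
      · rw [Set.indicator_of_mem hyQ]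
        have hfcy : fc y = f y := Set.indicator_of_mem hyQ f
        calc (‖(k z y - k z₀ y) * fc y‖₊ : ℝ≥0∞)
            = (‖k z y - k z₀ y‖₊ : ℝ≥0∞) * (‖fc y‖₊ : ℝ≥0∞) := by
              rw [nnnorm_mul]; push_cast; ring
          _ ≤ (‖k z y - k z₀ y‖₊ : ℝ≥0∞) * ENNReal.ofReal Mr := by
              gcongr
              rw [hfcy, ← enorm_eq_nnnorm, ← ofReal_norm]
              exact ENNReal.ofReal_le_ofReal hy
          _ = ENNReal.ofReal Mr * (‖k z y - k z₀ y‖₊ : ℝ≥0∞) := mul_comm _ _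
      · rw [Set.indicator_of_notMem hyQ]
        have : fc y = 0 := Set.indicator_of_notMem hyQ f
        simp [this]
    calc ∫⁻ y, (‖(k z y - k z₀ y) * fc y‖₊ : ℝ≥0∞) ∂μ
        ≤ ∫⁻ y, Qhatᶜ.indicator
            (fun y => ENNReal.ofReal Mr * (‖k z y - k z₀ y‖₊ : ℝ≥0∞)) y ∂μ :=
          lintegral_mono_ae hb
      _ = ∫⁻ y in Qhatᶜ, ENNReal.ofReal Mr * (‖k z y - k z₀ y‖₊ : ℝ≥0∞) ∂μ := by
          rw [lintegral_indicator hQhatmeas.compl]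
      _ = ENNReal.ofReal Mr * ∫⁻ y in Qhatᶜ, (‖k z y - k z₀ y‖₊ : ℝ≥0∞) ∂μ :=
          lintegral_const_mul' _ _ ENNReal.ofReal_ne_top
      _ ≤ ENNReal.ofReal Mr * ENNReal.ofReal H :=
          mul_le_mul_right (hHor z hz z₀ hz₀) _
  have hDaesm : ∀ z : Ω, AEStronglyMeasurable (fun y => (k z y - k z₀ y) * fc y) μ :=
    fun z => (((hkz z).sub (hkz z₀)).aestronglyMeasurable).mul hfcaesm
  have hDint : ∀ z ∈ Q, Integrable (fun y => (k z y - k z₀ y) * fc y) μ := by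
    intro z hz
    refine ⟨hDaesm z, ?_⟩
    have : ∫⁻ y, (‖(k z y - k z₀ y) * fc y‖₊ : ℝ≥0∞) ∂μ < ∞ :=
      lt_of_le_of_lt (hDlint z hz) (by finiteness)
    exact this
  -- key pointwise bound
  have hφbd : ∀ z ∈ Q, ‖φ z - c‖ ≤ H * Mr := by
    by_cases hA : Integrable (fun y => k z₀ y * fc y) μ
    · intro z hz
      have hzint : Integrable (fun y => k z y * fc y) μ := by
        have := (hDint z hz).add hA
        convert this using 1
        · rfl
        funext y; simp only [Pi.add_apply, Pi.sub_apply]; ring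
      have hdiff : φ z - c = ∫ y, (k z y - k z₀ y) * fc y ∂μ := by
        rw [hcdef, hφdef, ← integral_sub hzint hA]
        congr 1; funext y; ring
      rw [hdiff]
      have hle := norm_integral_le_lintegral_norm (fun y => (k z y - k z₀ y) * fc y) (μ := μ)
      have heq : ∫⁻ y, ENNReal.ofReal ‖(k z y - k z₀ y) * fc y‖ ∂μ
          = ∫⁻ y, (‖(k z y - k z₀ y) * fc y‖₊ : ℝ≥0∞) ∂μ := by
        simp_rw [ofReal_norm, enorm_eq_nnnorm]
      rw [heq] at hle
      refine hle.trans ?_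
      have := ENNReal.toReal_mono (a := ∫⁻ y, (‖(k z y - k z₀ y) * fc y‖₊ : ℝ≥0∞) ∂μ)
        (by finiteness) (hDlint z hz)
      rw [ENNReal.toReal_mul, ENNReal.toReal_ofReal hMr0, ENNReal.toReal_ofReal hH] at this
      linarith
    · intro z hz
      have hznot : ¬ Integrable (fun y => k z y * fc y) μ := by
        intro hzint
        apply hA
        have := hzint.sub (hDint z hz)
        convert this using 1
        funext y; simp only [Pi.add_apply, Pi.sub_apply]; ring
      have h1' : φ z = 0 := integral_undef hznot
      have h2' : c = 0 := integral_undef hA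
      rw [h1', h2']
      simpa using mul_nonneg hH hMr0
  -- eLpNorm estimates
  set S : ℝ≥0∞ := eLpNorm (fun x => g x - c) 2 (μ.restrict Q) with hSdef
  have hS_tri : S ≤ eLpNorm g1 2 (μ.restrict Q)
      + eLpNorm (fun x => g2 x - c) 2 (μ.restrict Q) := by
    have hcongr : (fun x => g x - c) =ᵐ[μ.restrict Q]
        (fun x => g1 x + (g2 x - c)) := by
      filter_upwards [ae_restrict_of_ae hg_decomp] with x hx
      simp only [Pi.add_apply] at hx
      rw [hx]; ring
    rw [hSdef, eLpNorm_congr_ae hcongr]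
    exact eLpNorm_add_le ((Lp.aestronglyMeasurable _).restrict)
      (((Lp.aestronglyMeasurable _).restrict).sub aestronglyMeasurable_const) one_le_two
  have hterm1 : eLpNorm g1 2 (μ.restrict Q) ≤ ENNReal.ofReal ‖T‖ * eLpNorm f1 2 μ := by
    refine (eLpNorm_mono_measure _ Measure.restrict_le_self).trans ?_
    calc eLpNorm g1 2 μ = ENNReal.ofReal ‖T (h1.toLp f1)‖ := by
          rw [hg1def, Lp.norm_def, ENNReal.ofReal_toReal (Lp.eLpNorm_ne_top _)]
      _ ≤ ENNReal.ofReal (‖T‖ * ‖h1.toLp f1‖) :=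
          ENNReal.ofReal_le_ofReal (T.le_opNorm _)
      _ = ENNReal.ofReal ‖T‖ * ENNReal.ofReal ‖h1.toLp f1‖ :=
          ENNReal.ofReal_mul (norm_nonneg _)
      _ = ENNReal.ofReal ‖T‖ * eLpNorm f1 2 μ := by
          congr 1
          rw [ofReal_norm, Lp.enorm_toLp]
  have hsize1 : eLpNorm f1 2 μ ≤ (ENNReal.ofReal c₀ * μ Q) ^ (2⁻¹ : ℝ) * N := by
    rw [hf1def, eLpNorm_indicator_eq_eLpNorm_restrict hQhatmeas]
    refine le_trans (eLpNorm_le_of_ae_bound (ae_restrict_of_ae hfbd)) ?_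
    rw [Measure.restrict_apply_univ, hofMr]
    have h2t : ((2:ℝ≥0∞).toReal)⁻¹ = (2⁻¹ : ℝ) := by norm_num
    rw [h2t]
    exact mul_le_mul_left (ENNReal.rpow_le_rpow hdoubling (by norm_num)) _
  have hterm2 : eLpNorm (fun x => g2 x - c) 2 (μ.restrict Q)
      ≤ (μ Q) ^ (2⁻¹ : ℝ) * (ENNReal.ofReal H * N) := by
    have hcongr : (fun x => g2 x - c) =ᵐ[μ.restrict Q] fun z => φ z - c := by
      filter_upwards [hrep2] with z hz
      rw [hz]
    rw [eLpNorm_congr_ae hcongr]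
    have hbd : ∀ᵐ z ∂μ.restrict Q, ‖φ z - c‖ ≤ H * Mr := by
      filter_upwards [ae_restrict_mem hQmeas] with z hz using hφbd z hz
    refine le_trans (eLpNorm_le_of_ae_bound hbd) ?_
    rw [Measure.restrict_apply_univ, ENNReal.ofReal_mul hH, hofMr]
    have h2t : ((2:ℝ≥0∞).toReal)⁻¹ = (2⁻¹ : ℝ) := by norm_num
    rw [h2t]
  -- combine
  set B : ℝ≥0∞ := ENNReal.ofReal ‖T‖ * (ENNReal.ofReal c₀) ^ (2⁻¹ : ℝ) + ENNReal.ofReal H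
    with hBdef
  have hS_le : S ≤ B * (N * (μ Q) ^ (2⁻¹ : ℝ)) := by
    refine hS_tri.trans ?_
    refine le_trans (add_le_add (hterm1.trans (mul_le_mul_right hsize1 _)) hterm2) ?_
    rw [ENNReal.mul_rpow_of_nonneg _ _ (by norm_num : (0:ℝ) ≤ 2⁻¹), hBdef]
    ring_nf
    exact le_of_eq (by ring)
  have hBval : B = ENNReal.ofReal (‖T‖ * Real.sqrt c₀ + H) := by
    rw [hBdef, ENNReal.ofReal_add (mul_nonneg (norm_nonneg _) (Real.sqrt_nonneg _)) hH,
      ENNReal.ofReal_mul (norm_nonneg _), ENNReal.ofReal_rpow_of_pos (lt_of_lt_of_le one_pos hc₀),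
      Real.sqrt_eq_rpow, one_div]
  -- conclude
  refine le_trans (iInf_le _ c) ?_
  have hS2 : ∫⁻ x in Q, (‖g x - c‖₊ : ℝ≥0∞) ^ 2 ∂μ = S ^ 2 := by
    rw [hSdef, eLpNorm_eq_lintegral_rpow_enorm_toReal (by norm_num) (by norm_num)]
    rw [← ENNReal.rpow_natCast _ 2, ← ENNReal.rpow_mul]
    norm_num
    simp only [enorm_eq_nnnorm]
  rw [hS2]
  calc (μ Q)⁻¹ * S ^ 2 ≤ (μ Q)⁻¹ * (B * (N * (μ Q) ^ (2⁻¹ : ℝ))) ^ 2 := by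
        gcongr
      _ = B ^ 2 * N ^ 2 * (((μ Q) ^ (2⁻¹ : ℝ)) ^ 2 * (μ Q)⁻¹) := by ring
      _ = B ^ 2 * N ^ 2 * (μ Q * (μ Q)⁻¹) := by
        congr 2
        rw [← ENNReal.rpow_natCast ((μ Q) ^ (2⁻¹ : ℝ)) 2, ← ENNReal.rpow_mul]
        norm_num
      _ ≤ B ^ 2 * N ^ 2 := by
        rw [ENNReal.mul_inv_cancel hQpos.ne' hQfin.ne, mul_one]
      _ = ENNReal.ofReal ((‖T‖ * Real.sqrt c₀ + H) ^ 2) * N ^ 2 := by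
        rw [hBval, ← ENNReal.ofReal_pow (by positivity)]
end

section
/- Let m be Lebesgue measure on ℝ². Let Q_0 = [−1/2,1/2]² and Q_s = 3^s·Q_0 = [−3^s/2, 3^s/2]² for s ≥ 1. Define A_1 = Q_0, B_1 = Q_1, and for s ≥ 2: A_s = Q_{2s−2}∖Q_{2s−4}, B_s = Q_{2s−1}∖Q_{2s−3}. Then the atomic σ-algebras Σ_a = σ⟨A_s : s ≥ 1⟩ and Σ_b = σ⟨B_s : s ≥ 1⟩ form an admissible covering of (ℝ², m) (with distinguished atoms A_0 = B_0 = ∅, since m(ℝ²) = ∞). -/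
open MeasureTheory ENNReal

/-- The cube `Q_s = 3^s·[-1/2,1/2]²` in `ℝ²`. -/
def Q13 (s : ℕ) : Set (Fin 2 → ℝ) :=
  Set.Icc (fun _ => -((3 : ℝ) ^ s / 2)) fun _ => (3 : ℝ) ^ s / 2

/-- The corona atoms `A_1 = Q_0` and `A_s = Q_{2s-2} ∖ Q_{2s-4}` for `s ≥ 2`
(reindexed so that `A13 k` is the paper's `A_{k+1}`). -/
def A13 : ℕ → Set (Fin 2 → ℝ)
  | 0 => Q13 0
  | k + 1 => Q13 (2 * (k + 1)) \ Q13 (2 * k)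

/-- The corona atoms `B_1 = Q_1` and `B_s = Q_{2s-1} ∖ Q_{2s-3}` for `s ≥ 2`
(reindexed so that `B13 k` is the paper's `B_{k+1}`). -/
def B13 : ℕ → Set (Fin 2 → ℝ)
  | 0 => Q13 1
  | k + 1 => Q13 (2 * (k + 1) + 1) \ Q13 (2 * k + 1)


lemma diff_inter_diff_eq {α} {X Y A C : Set α} (hXY : X ⊆ Y) (hAC : A ⊆ C) :
    (X \ A) ∩ (Y \ C) = X \ C := by
  ext x
  constructor
  · rintro ⟨⟨hx, _⟩, _, hc⟩; exact ⟨hx, hc⟩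
  · rintro ⟨hx, hc⟩; exact ⟨⟨hx, fun h => hc (hAC h)⟩, hXY hx, hc⟩

lemma Q13_mono {s t : ℕ} (h : s ≤ t) : Q13 s ⊆ Q13 t := by
  apply Set.Icc_subset_Icc <;> intro i <;> simp only []
  · have : (3:ℝ)^s ≤ 3^t := pow_le_pow_right₀ (by norm_num) h
    linarith
  · have : (3:ℝ)^s ≤ 3^t := pow_le_pow_right₀ (by norm_num) h
    linarith

lemma measurableSet_Q13 (s : ℕ) : MeasurableSet (Q13 s) := measurableSet_Icc

lemma volume_Q13 (s : ℕ) : volume (Q13 s) = ENNReal.ofReal ((9:ℝ) ^ s) := by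
  rw [Q13, Real.volume_Icc_pi]
  have h3 : (0:ℝ) ≤ 3 ^ s := by positivity
  rw [Finset.prod_const]
  rw [show ((3:ℝ)^s/2 - -(3^s/2)) = 3^s by ring]
  rw [Finset.card_univ, Fintype.card_fin, ← ENNReal.ofReal_pow h3]
  congr 1
  rw [← pow_mul, mul_comm, pow_mul]
  norm_num

lemma volume_Q13_diff {s t : ℕ} (h : s ≤ t) :
    volume (Q13 t \ Q13 s) = ENNReal.ofReal ((9:ℝ) ^ t - 9 ^ s) := by
  rw [measure_diff (Q13_mono h) (measurableSet_Q13 s).nullMeasurableSet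
    (by rw [volume_Q13]; exact ofReal_ne_top), volume_Q13, volume_Q13,
    ← ENNReal.ofReal_sub _ (by positivity)]

lemma exists_mem_Q13 (x : Fin 2 → ℝ) (o : ℕ) : ∃ k, x ∈ Q13 (2 * k + o) := by
  obtain ⟨n, hn⟩ := pow_unbounded_of_one_lt (2 * (|x 0| ⊔ |x 1|)) (show (1:ℝ) < 3 by norm_num)
  refine ⟨n, ?_⟩
  have h3 : (3:ℝ) ^ n ≤ 3 ^ (2 * n + o) := pow_le_pow_right₀ (by norm_num) (by omega)
  have hx : ∀ i : Fin 2, |x i| ≤ 3 ^ (2 * n + o) / 2 := by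
    intro i
    have hi : |x i| ≤ |x 0| ⊔ |x 1| := by
      fin_cases i
      · exact le_max_left _ _
      · exact le_max_right _ _
    nlinarith [abs_nonneg (x 0), abs_nonneg (x 1)]
  constructor <;> intro i <;> have := abs_le.mp (hx i)
  · exact this.1
  · exact this.2

/-- The annuli: `ann o 0 = Q_o`, `ann o (k+1) = Q_{2k+2+o} \ Q_{2k+o}`. -/
def ann (o : ℕ) : ℕ → Set (Fin 2 → ℝ)
  | 0 => Q13 o
  | k + 1 => Q13 (2 * (k + 1) + o) \ Q13 (2 * k + o)

lemma ann_subset (o k : ℕ) : ann o k ⊆ Q13 (2 * k + o) := by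
  cases k with
  | zero => exact Q13_mono (by omega)
  | succ k => exact Set.diff_subset

lemma ann_disjoint (o : ℕ) {k l : ℕ} (h : k < l) : Disjoint (ann o k) (ann o l) := by
  obtain ⟨m, rfl⟩ : ∃ m, l = m + 1 := ⟨l - 1, by omega⟩
  have h1 : ann o k ⊆ Q13 (2 * m + o) :=
    (ann_subset o k).trans (Q13_mono (by omega))
  have h2 : Disjoint (Q13 (2 * m + o)) (ann o (m + 1)) := by
    rw [Set.disjoint_right]
    rintro x ⟨_, hx⟩ hq
    exact hx hq
  exact h2.mono_left h1

lemma ann_cover (o : ℕ) : ⋃ k, ann o k = Set.univ := by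
  ext x
  simp only [Set.mem_iUnion, Set.mem_univ, iff_true]
  have hex := exists_mem_Q13 x o
  classical
  let k := Nat.find hex
  have hk : x ∈ Q13 (2 * k + o) := Nat.find_spec hex
  cases hkk : k with
  | zero =>
    rw [hkk] at hk
    exact ⟨0, by simpa [ann] using hk⟩
  | succ m =>
    refine ⟨m + 1, (hkk ▸ hk), fun hx => ?_⟩
    exact Nat.find_min hex (by omega : m < k) hx

lemma ann_measurable (o k : ℕ) : MeasurableSet (ann o k) := by
  cases k with
  | zero => exact measurableSet_Q13 o
  | succ k => exact (measurableSet_Q13 _).diff (measurableSet_Q13 _)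

lemma volume_ann (o k : ℕ) :
    volume (ann o k) = ENNReal.ofReal ((9:ℝ) ^ (2 * k + o) - if k = 0 then 0 else 9 ^ (2 * (k - 1) + o)) := by
  cases k with
  | zero => simp [ann, volume_Q13]
  | succ k => simp [ann, volume_Q13_diff (show 2*k+o ≤ 2*(k+1)+o by omega)]

lemma nine_pow_lt {s t : ℕ} (h : s < t) : (9:ℝ) ^ s < 9 ^ t :=
  pow_lt_pow_right₀ (by norm_num) h

lemma volume_ann_pos (o k : ℕ) : 0 < volume (ann o k) := by
  rw [volume_ann, ENNReal.ofReal_pos]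
  split
  · have : (0:ℝ) < 9 ^ (2*k+o) := by positivity
    linarith
  · have := nine_pow_lt (show 2 * (k-1) + o < 2*k+o by omega)
    linarith

lemma volume_ann_lt_top (o k : ℕ) : volume (ann o k) < ∞ := by
  rw [volume_ann]; exact ofReal_lt_top

lemma A13_eq : A13 = ann 0 := by
  funext k; cases k <;> simp [A13, ann]

lemma B13_eq : B13 = ann 1 := by
  funext k; cases k <;> simp [B13, ann]

-- intersections
lemma interAB0 : A13 0 ∩ B13 0 = Q13 0 := by
  simp only [A13, B13]
  exact Set.inter_eq_left.mpr (Q13_mono (by omega))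

lemma interAB1 (k : ℕ) : A13 (k + 1) ∩ B13 k = Q13 (2 * k + 1) \ Q13 (2 * k) := by
  cases k with
  | zero =>
    simp only [A13, B13]
    norm_num
    ext x
    constructor
    · rintro ⟨⟨_, h0⟩, h1⟩; exact ⟨h1, h0⟩
    · rintro ⟨h1, h0⟩; exact ⟨⟨Q13_mono (by omega) h1, h0⟩, h1⟩
  | succ m =>
    simp only [A13, B13]
    rw [Set.inter_comm]
    have := diff_inter_diff_eq (X := Q13 (2*(m+1)+1)) (Y := Q13 (2*(m+1+1)))
      (A := Q13 (2*m+1)) (C := Q13 (2*(m+1))) (Q13_mono (by omega)) (Q13_mono (by omega))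
    rw [this]

lemma interAB2 (k : ℕ) : A13 (k + 1) ∩ B13 (k + 1) = Q13 (2 * k + 2) \ Q13 (2 * k + 1) := by
  simp only [A13, B13]
  have := diff_inter_diff_eq (X := Q13 (2*(k+1))) (Y := Q13 (2*(k+1)+1))
    (A := Q13 (2*k)) (C := Q13 (2*k+1)) (Q13_mono (by omega)) (Q13_mono (by omega))
  rw [this, show 2*(k+1) = 2*k+2 by omega]

lemma interAB_empty {i j : ℕ} (h1 : i ≠ j) (h2 : i ≠ j + 1) : A13 i ∩ B13 j = ∅ := by
  rw [Set.eq_empty_iff_forall_notMem]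
  rintro x ⟨hA, hB⟩
  rcases i with _ | k
  · -- A13 0 = Q13 0, j = m+1 (since i ≠ j means j ≠ 0)
    obtain ⟨m, rfl⟩ : ∃ m, j = m + 1 := ⟨j - 1, by omega⟩
    exact hB.2 (Q13_mono (by omega) hA)
  · rcases j with _ | m
    · -- i = k+1, j = 0, k+1 ≠ 1 so k ≥ 1
      have hk : 1 ≤ 2 * k := by omega
      exact hA.2 (Q13_mono hk hB)
    · -- i = k+1, j = m+1, k ≠ m+1? conditions: k+1 ≠ m+1 (k≠m), k+1 ≠ m+2 (k ≠ m+1)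
      rcases lt_or_gt_of_ne (show k ≠ m by omega) with hlt | hgt
      · -- k < m : A ⊆ Q_{2k+2} ⊆ Q_{2m+1}, B misses Q_{2m+1}
        have hk : 2 * (k+1) ≤ 2 * m + 1 := by omega
        exact hB.2 (Q13_mono hk hA.1)
      · -- k > m, and k ≠ m+1, so k ≥ m+2 : B ⊆ Q_{2m+3} ⊆ Q_{2k}
        have hk : 2 * (m+1) + 1 ≤ 2 * k := by omega
        exact hA.2 (Q13_mono hk hB.1)

noncomputable def Pann (o : ℕ) : AtomicPartition (volume : Measure (Fin 2 → ℝ)) where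
  ι := ℕ
  countable := inferInstance
  atom := ann o
  measurableSet := ann_measurable o
  disjoint := fun i j hij => by
    rcases hij.lt_or_gt with h | h
    · exact ann_disjoint o h
    · exact (ann_disjoint o h).symm
  cover := ann_cover o
  pos := volume_ann_pos o
  lt_top := volume_ann_lt_top o

lemma atoms_subset_or_disjoint {Ω : Type*} {m : MeasurableSpace Ω} {μ : Measure Ω}
    (P : AtomicPartition μ) {S : Set Ω}
    (hS : MeasurableSet[MeasurableSpace.generateFrom (Set.range P.atom)] S) (i : P.ι) :
    P.atom i ⊆ S ∨ P.atom i ∩ S = ∅ := by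
  induction S, hS using MeasurableSpace.generateFrom_induction with
  | hC t ht _ =>
    obtain ⟨j, rfl⟩ := ht
    rcases eq_or_ne i j with rfl | hij
    · exact Or.inl Set.Subset.rfl
    · exact Or.inr (Set.disjoint_iff_inter_eq_empty.mp (P.disjoint hij))
  | empty => exact Or.inr (Set.inter_empty _)
  | compl t ht ih =>
    rcases ih with h | h
    · exact Or.inr (by rw [Set.eq_empty_iff_forall_notMem]; rintro x ⟨hx, hc⟩; exact hc (h hx))
    · refine Or.inl fun x hx hc => ?_
      rw [Set.eq_empty_iff_forall_notMem] at h
      exact h x ⟨hx, hc⟩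
  | iUnion f hf ih =>
    by_cases h : ∃ n, P.atom i ⊆ f n
    · obtain ⟨n, hn⟩ := h
      exact Or.inl (hn.trans (Set.subset_iUnion f n))
    · push_neg at h
      refine Or.inr ?_
      rw [Set.inter_iUnion]
      rw [Set.iUnion_eq_empty]
      intro n
      rcases ih n with h' | h'
      · exact absurd h' (h n)
      · exact h'

lemma vol_inter_pos1 (k : ℕ) : 0 < volume (ann 0 (k+1) ∩ ann 1 k) := by
  rw [← A13_eq, ← B13_eq, interAB1, volume_Q13_diff (by omega), ENNReal.ofReal_pos]
  have := nine_pow_lt (show 2*k < 2*k+1 by omega)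
  linarith

lemma vol_inter_pos2 (k : ℕ) : 0 < volume (ann 0 k ∩ ann 1 k) := by
  rw [← A13_eq, ← B13_eq]
  cases k with
  | zero =>
    rw [interAB0, volume_Q13, ENNReal.ofReal_pos]
    norm_num
  | succ m =>
    rw [interAB2, volume_Q13_diff (by omega), ENNReal.ofReal_pos]
    have := nine_pow_lt (show 2*m+1 < 2*m+2 by omega)
    linarith

lemma trivial_inter13 :
    ∀ S T : Set (Fin 2 → ℝ),
      MeasurableSet[MeasurableSpace.generateFrom (Set.range (ann 0))] S →
      MeasurableSet[MeasurableSpace.generateFrom (Set.range (ann 1))] T →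
      volume (symmDiff S T) = 0 → volume S = 0 ∨ volume Sᶜ = 0 := by
  intro S T hS hT h0
  have hA : ∀ i, ann 0 i ⊆ S ∨ ann 0 i ∩ S = ∅ :=
    atoms_subset_or_disjoint (Pann 0) hS
  have hB : ∀ j, ann 1 j ⊆ T ∨ ann 1 j ∩ T = ∅ :=
    atoms_subset_or_disjoint (Pann 1) hT
  have key : ∀ i j, 0 < volume (ann 0 i ∩ ann 1 j) → (ann 0 i ⊆ S ↔ ann 1 j ⊆ T) := by
    intro i j hpos
    constructor
    · intro hiS
      rcases hB j with h | h
      · exact h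
      · exfalso
        have hsub : ann 0 i ∩ ann 1 j ⊆ symmDiff S T := by
          rintro x ⟨hxi, hxj⟩
          rw [Set.mem_symmDiff]
          exact Or.inl ⟨hiS hxi, fun hxT =>
            Set.eq_empty_iff_forall_notMem.mp h x ⟨hxj, hxT⟩⟩
        exact absurd (measure_mono_null hsub h0) (ne_of_gt hpos)
    · intro hjT
      rcases hA i with h | h
      · exact h
      · exfalso
        have hsub : ann 0 i ∩ ann 1 j ⊆ symmDiff S T := by
          rintro x ⟨hxi, hxj⟩
          rw [Set.mem_symmDiff]
          exact Or.inr ⟨hjT hxj, fun hxS =>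
            Set.eq_empty_iff_forall_notMem.mp h x ⟨hxi, hxS⟩⟩
        exact absurd (measure_mono_null hsub h0) (ne_of_gt hpos)
  have chain : ∀ k, (ann 0 k ⊆ S ↔ ann 0 0 ⊆ S) := by
    intro k
    induction k with
    | zero => rfl
    | succ m ih =>
      rw [key (m+1) m (vol_inter_pos1 m), ← key m m (vol_inter_pos2 m), ih]
  rcases hA 0 with h | h
  · right
    have hall : ∀ k, ann 0 k ⊆ S := fun k => (chain k).mpr h
    have huniv : S = Set.univ :=
      Set.univ_subset_iff.mp (by rw [← ann_cover 0]; exact Set.iUnion_subset hall)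
    rw [huniv, Set.compl_univ]
    exact measure_empty
  · left
    have hnot : ¬ ann 0 0 ⊆ S := by
      intro hsub
      have : ann 0 0 ∩ S = ann 0 0 := Set.inter_eq_left.mpr hsub
      rw [this] at h
      have hp := volume_ann_pos 0 0
      rw [h, measure_empty] at hp
      exact lt_irrefl _ hp
    have hk : ∀ k, ann 0 k ∩ S = ∅ := fun k =>
      (hA k).resolve_left (fun hsub => hnot ((chain k).mp hsub))
    have hempty : S = ∅ := by
      have hrw : S = ⋃ k, ann 0 k ∩ S := by
        rw [← Set.iUnion_inter, ann_cover 0, Set.univ_inter]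
      rw [hrw, Set.iUnion_eq_empty]
      exact hk
    rw [hempty]
    exact measure_empty

lemma vol_inter_eq_zero {i j : ℕ} (h1 : i ≠ j) (h2 : i ≠ j + 1) :
    volume (ann 0 i ∩ ann 1 j) = 0 := by
  rw [← A13_eq, ← B13_eq, interAB_empty h1 h2, measure_empty]

lemma rCard13 (j : ℕ) : rCard volume (Pann 0) (Pann 1) j = 2 := by
  have hiff : ∀ i : ℕ, i ∈ ({j, j + 1} : Finset ℕ) ↔
      0 < volume (ann 0 i ∩ ann 1 j) := by
    intro i
    simp only [Finset.mem_insert, Finset.mem_singleton]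
    constructor
    · rintro (rfl | rfl)
      · exact vol_inter_pos2 _
      · exact vol_inter_pos1 _
    · intro hpos
      by_contra hc
      push_neg at hc
      rw [vol_inter_eq_zero hc.1 hc.2] at hpos
      exact lt_irrefl _ hpos
  have := Equiv.tsum_eq (Equiv.subtypeEquivRight hiff) (fun _ => (1 : ℝ≥0∞))
  show (∑' _i : {i : ℕ // 0 < volume (ann 0 i ∩ ann 1 j)}, (1 : ℝ≥0∞)) = 2
  rw [← this, tsum_fintype, Finset.sum_const, Finset.card_univ, Fintype.card_coe,
    Finset.card_pair (by omega : j ≠ j + 1)]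
  simp

lemma term_le {a b c : ℝ} (ha : 0 ≤ a) (hb : 0 < b) (hc : 0 < c)
    (h : 2 * a ^ 2 ≤ 1 / 4 * (b * c)) :
    2 * ENNReal.ofReal a ^ 2 / (ENNReal.ofReal b * ENNReal.ofReal c) ≤
      ENNReal.ofReal (1 / 4) := by
  rw [← ENNReal.ofReal_mul hb.le, ← ENNReal.ofReal_pow ha,
    show (2 : ℝ≥0∞) = ENNReal.ofReal 2 by norm_num,
    ← ENNReal.ofReal_mul (by norm_num),
    ← ENNReal.ofReal_div_of_pos (by positivity)]
  apply ENNReal.ofReal_le_ofReal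
  rw [div_le_iff₀ (by positivity)]
  linarith

lemma vol_ann0S (k : ℕ) :
    volume (ann 0 (k+1)) = ENNReal.ofReal ((9:ℝ)^(2*(k+1)+0) - 9^(2*k+0)) := by
  show volume (Q13 (2*(k+1)+0) \ Q13 (2*k+0)) = _
  rw [volume_Q13_diff (by omega)]

lemma vol_ann1S (k : ℕ) :
    volume (ann 1 (k+1)) = ENNReal.ofReal ((9:ℝ)^(2*(k+1)+1) - 9^(2*k+1)) := by
  show volume (Q13 (2*(k+1)+1) \ Q13 (2*k+1)) = _
  rw [volume_Q13_diff (by omega)]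

lemma vol_interAB1 (k : ℕ) :
    volume (ann 0 (k+1) ∩ ann 1 k) = ENNReal.ofReal ((9:ℝ)^(2*k+1) - 9^(2*k)) := by
  rw [← A13_eq, ← B13_eq, interAB1, volume_Q13_diff (by omega)]

lemma vol_interAB2 (k : ℕ) :
    volume (ann 0 (k+1) ∩ ann 1 (k+1)) = ENNReal.ofReal ((9:ℝ)^(2*k+2) - 9^(2*k+1)) := by
  rw [← A13_eq, ← B13_eq, interAB2, volume_Q13_diff (by omega)]

lemma atomSum_le13 (i : ℕ) :
    atomSum volume (Pann 0) (Pann 1) i ≤ ENNReal.ofReal (1/2) := by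
  show (∑' j : ℕ, rCard volume (Pann 0) (Pann 1) j * volume (ann 0 i ∩ ann 1 j) ^ 2 /
      (volume (ann 0 i) * volume (ann 1 j))) ≤ ENNReal.ofReal (1/2)
  simp only [rCard13]
  have hzero : ∀ i j : ℕ, i ≠ j → i ≠ j + 1 →
      (2:ℝ≥0∞) * volume (ann 0 i ∩ ann 1 j) ^ 2 / (volume (ann 0 i) * volume (ann 1 j)) = 0 := by
    intro i j h1 h2
    rw [vol_inter_eq_zero h1 h2]
    simp
  have hofhalf : ENNReal.ofReal (1/4) + ENNReal.ofReal (1/4) = ENNReal.ofReal (1/2) := by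
    rw [← ENNReal.ofReal_add (by norm_num) (by norm_num)]
    norm_num
  match i with
  | 0 =>
    have hs : ∀ j ∉ ({0} : Finset ℕ),
        (2:ℝ≥0∞) * volume (ann 0 0 ∩ ann 1 j) ^ 2 / (volume (ann 0 0) * volume (ann 1 j)) = 0 := by
      intro j hj
      simp only [Finset.mem_singleton] at hj
      exact hzero 0 j (by omega) (by omega)
    rw [tsum_eq_sum hs, Finset.sum_singleton]
    have e1 : volume (ann 0 0 ∩ ann 1 0) = ENNReal.ofReal ((9:ℝ)^0) := by
      rw [← A13_eq, ← B13_eq, interAB0, volume_Q13]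
    have e2 : volume (ann 0 0) = ENNReal.ofReal ((9:ℝ)^0) := by
      show volume (Q13 0) = _
      rw [volume_Q13]
    have e3 : volume (ann 1 0) = ENNReal.ofReal ((9:ℝ)^1) := by
      show volume (Q13 1) = _
      rw [volume_Q13]
    rw [e1, e2, e3]
    refine le_trans (term_le (by positivity) (by positivity) (by positivity) (by norm_num))
      (ENNReal.ofReal_le_ofReal (by norm_num))
  | (k+1) =>
    have hs : ∀ j ∉ ({k, k+1} : Finset ℕ),
        (2:ℝ≥0∞) * volume (ann 0 (k+1) ∩ ann 1 j) ^ 2 /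
          (volume (ann 0 (k+1)) * volume (ann 1 j)) = 0 := by
      intro j hj
      simp only [Finset.mem_insert, Finset.mem_singleton] at hj
      push_neg at hj
      exact hzero (k+1) j (by omega) (by omega)
    rw [tsum_eq_sum hs, Finset.sum_pair (by omega : k ≠ k + 1)]
    rw [← hofhalf]
    refine add_le_add ?_ ?_
    · -- term j = k
      rw [vol_interAB1 k, vol_ann0S k]
      match k with
      | 0 =>
        have e3 : volume (ann 1 0) = ENNReal.ofReal ((9:ℝ)^1) := by
          show volume (Q13 1) = _
          rw [volume_Q13]
        rw [e3]
        refine term_le ?_ ?_ ?_ ?_ <;> norm_num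
      | (m+1) =>
        rw [vol_ann1S m]
        have h1 : (0:ℝ) ≤ 9^(2*(m+1)+1) - 9^(2*(m+1)) :=
          sub_nonneg.mpr (nine_pow_lt (by omega)).le
        have h2 : (0:ℝ) < 9^(2*(m+1+1)+0) - 9^(2*(m+1)+0) :=
          sub_pos.mpr (nine_pow_lt (by omega))
        have h3 : (0:ℝ) < 9^(2*(m+1)+1) - 9^(2*m+1) :=
          sub_pos.mpr (nine_pow_lt (by omega))
        refine term_le h1 h2 h3 ?_
        have hp : ∀ b : ℕ, (9:ℝ)^(2*m+b) = 9^b * (9:ℝ)^(2*m) := fun b => by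
          rw [pow_add, mul_comm]
        rw [show 2*(m+1)+1 = 2*m+3 from by ring, show 2*(m+1) = 2*m+2 from by ring,
          show 2*(m+1+1)+0 = 2*m+4 from by ring, show 2*m+2+0 = 2*m+2 from by ring]
        rw [hp 3, hp 2, hp 4, hp 1]
        nlinarith [sq_nonneg ((9:ℝ)^(2*m)), pow_pos (show (0:ℝ) < 9 by norm_num) (2*m)]
    · -- term j = k+1
      rw [vol_interAB2 k, vol_ann0S k, vol_ann1S k]
      have h1 : (0:ℝ) ≤ 9^(2*k+2) - 9^(2*k+1) :=
        sub_nonneg.mpr (nine_pow_lt (by omega)).le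
      have h2 : (0:ℝ) < 9^(2*(k+1)+0) - 9^(2*k+0) :=
        sub_pos.mpr (nine_pow_lt (by omega))
      have h3 : (0:ℝ) < 9^(2*(k+1)+1) - 9^(2*k+1) :=
        sub_pos.mpr (nine_pow_lt (by omega))
      refine term_le h1 h2 h3 ?_
      have hp : ∀ b : ℕ, (9:ℝ)^(2*k+b) = 9^b * (9:ℝ)^(2*k) := fun b => by
        rw [pow_add, mul_comm]
      rw [show 2*(k+1)+0 = 2*k+2 from by ring, show 2*(k+1)+1 = 2*k+3 from by ring,
        show 2*k+0 = 2*k from by ring]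
      rw [hp 2, hp 1, hp 3]
      nlinarith [sq_nonneg ((9:ℝ)^(2*k)), pow_pos (show (0:ℝ) < 9 by norm_num) (2*k)]

lemma volume_pi2_univ_eq_top : (volume : Measure (Fin 2 → ℝ)) Set.univ = ∞ := by
  by_contra h
  obtain ⟨n, hn⟩ := pow_unbounded_of_one_lt
    ((volume : Measure (Fin 2 → ℝ)) Set.univ).toReal (show (1:ℝ) < 9 by norm_num)
  have hle : ENNReal.ofReal ((9:ℝ)^n) ≤ volume (Set.univ : Set (Fin 2 → ℝ)) := by
    rw [← volume_Q13 n]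
    exact measure_mono (Set.subset_univ _)
  rw [ENNReal.ofReal_le_iff_le_toReal h] at hle
  linarith

/-- The corona decompositions `(A_s)_{s≥1}` and `(B_s)_{s≥1}` of `ℝ²`
built from the cubes `Q_s = 3^s Q_0` generate atomic σ-algebras forming an admissible
covering of `(ℝ², m)` with distinguished atoms `A₀ = B₀ = ∅`. -/
theorem statement13 :
    ∃ Pa Pb : AtomicPartition (volume : Measure (Fin 2 → ℝ)),
      Set.range Pa.atom = Set.range A13 ∧ Set.range Pb.atom = Set.range B13 ∧
      IsAdmissibleCovering volume Pa Pb none none := by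
  refine ⟨Pann 0, Pann 1, ?_, ?_, ?_⟩
  · rw [A13_eq]; rfl
  · rw [B13_eq]; rfl
  · refine ⟨?_, fun _ => ⟨rfl, rfl⟩, ?_, ?_⟩
    · exact trivial_inter13
    · intro h
      rw [volume_pi2_univ_eq_top] at h
      exact absurd h (lt_irrefl _)
    · refine min_lt_iff.mpr (Or.inl ?_)
      refine lt_of_le_of_lt (iSup₂_le fun i _ => atomSum_le13 i) ?_
      exact ENNReal.ofReal_lt_one.mpr (by norm_num)
end
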